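/- arXiv:1706.03573 — 7 statements merged into one kernel-verified Lean document; each statement's English description precedes it below -/
import Mathlib

section
/- If $C \subset \mathbb{R}^n$ is a pointed closed convex cone with nonempty interior and $K_0, K_1 \subseteq C$ are closed convex subsets, then the Minkowski sum $K_0 + K_1$ is closed. -/
open Set Pointwise Filter Topology Bornology

/-- If `C` is a pointed closed convex cone with nonempty interior and `K₀, K₁ ⊆ C` are
closed convex subsets, then the Minkowski sum `K₀ + K₁` is closed. -/
theorem closed_minkowski_sum {n : ℕ}
    (C K₀ K₁ : Set (EuclideanSpace ℝ (Fin n)))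
    (hC_closed : IsClosed C) (hC_conv : Convex ℝ C)
    (hC_cone : ∀ x ∈ C, ∀ r : ℝ, 0 ≤ r → r • x ∈ C)
    (hC_pointed : C ∩ (-C) = {0})
    (hC_int : (interior C).Nonempty)
    (hK₀C : K₀ ⊆ C) (hK₀closed : IsClosed K₀) (hK₀conv : Convex ℝ K₀)
    (hK₁C : K₁ ⊆ C) (hK₁closed : IsClosed K₁) (hK₁conv : Convex ℝ K₁) :
    IsClosed (K₀ + K₁) := by
  rw [← isSeqClosed_iff_isClosed]
  intro u z hu hz
  choose x hx y hy hxy using fun k => Set.mem_add.mp (hu k)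
  -- `u` is bounded in norm
  obtain ⟨Mu, hMu⟩ : BddAbove (Set.range fun k => ‖u k‖) := (hz.norm).bddAbove_range
  have hMu' : ∀ k, ‖u k‖ ≤ Mu := fun k => hMu ⟨k, rfl⟩
  -- claim: x is bounded
  have hxbdd : ∃ R : ℝ, ∀ k, ‖x k‖ ≤ R := by
    by_contra hcon
    push_neg at hcon
    choose g hg using fun R : ℝ => hcon R
    -- sequence with ‖x (g k)‖ > k
    set f : ℕ → ℕ := fun k => g (k : ℝ)
    have hf : ∀ k : ℕ, (k : ℝ) < ‖x (f k)‖ := fun k => hg (k : ℝ)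
    have hfpos : ∀ k : ℕ, 0 < ‖x (f k)‖ := fun k =>
      lt_of_le_of_lt (Nat.cast_nonneg k) (hf k)
    set w : ℕ → EuclideanSpace ℝ (Fin n) := fun k => ‖x (f k)‖⁻¹ • x (f k) with hw
    have hwS : ∀ k, w k ∈ C ∩ Metric.sphere 0 1 := by
      intro k
      refine ⟨hC_cone _ (hK₀C (hx (f k))) _ (inv_nonneg.2 (norm_nonneg _)), ?_⟩
      simp [hw, norm_smul, abs_of_nonneg (inv_nonneg.2 (norm_nonneg _)),
        inv_mul_cancel₀ (hfpos k).ne']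
    have hScompact : IsBounded (C ∩ Metric.sphere (0 : EuclideanSpace ℝ (Fin n)) 1) :=
      (Metric.isBounded_sphere).subset inter_subset_right
    obtain ⟨v, hv, φ, hφ, hvt⟩ := tendsto_subseq_of_bounded hScompact hwS
    have hSclosed : IsClosed (C ∩ Metric.sphere (0 : EuclideanSpace ℝ (Fin n)) 1) :=
      hC_closed.inter Metric.isClosed_sphere
    rw [hSclosed.closure_eq] at hv
    -- ‖x (f (φ k))‖ → ∞
    have hnormx : Tendsto (fun k => ‖x (f (φ k))‖) atTop atTop :=
      tendsto_atTop_mono (fun k => (hf (φ k)).le)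
        (tendsto_natCast_atTop_atTop.comp hφ.tendsto_atTop)
    have hinv : Tendsto (fun k => ‖x (f (φ k))‖⁻¹) atTop (𝓝 0) :=
      hnormx.inv_tendsto_atTop
    -- the scaled u tends to 0
    have hsu : Tendsto (fun k => ‖x (f (φ k))‖⁻¹ • u (f (φ k))) atTop
        (𝓝 (0 : EuclideanSpace ℝ (Fin n))) := by
      refine squeeze_zero_norm (a := fun k => ‖x (f (φ k))‖⁻¹ * Mu) ?_ ?_
      · intro k
        rw [norm_smul, Real.norm_eq_abs, abs_of_nonneg (inv_nonneg.2 (norm_nonneg _))]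
        exact mul_le_mul_of_nonneg_left (hMu' _) (inv_nonneg.2 (norm_nonneg _))
      · simpa using hinv.mul_const Mu
    -- scaled y tends to -v
    have hc : Tendsto (fun k => ‖x (f (φ k))‖⁻¹ • y (f (φ k))) atTop (𝓝 (-v)) := by
      have : (fun k => ‖x (f (φ k))‖⁻¹ • y (f (φ k)))
          = fun k => ‖x (f (φ k))‖⁻¹ • u (f (φ k)) - w (φ k) := by
        funext k
        rw [hw]
        simp only [← hxy (f (φ k)), smul_add]
        abel
      rw [this]
      simpa using hsu.sub hvt
    have hnegv : -v ∈ C :=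
      hC_closed.isSeqClosed (fun k =>
        hC_cone _ (hK₁C (hy (f (φ k)))) _ (inv_nonneg.2 (norm_nonneg _))) hc
    have : v ∈ C ∩ (-C) := ⟨hv.1, by simpa using hnegv⟩
    rw [hC_pointed] at this
    have : ‖v‖ = 1 := by simpa using hv.2
    simp_all
  obtain ⟨R, hR⟩ := hxbdd
  have hxball : ∀ k, x k ∈ Metric.closedBall (0 : EuclideanSpace ℝ (Fin n)) R := by
    intro k; simpa [Metric.mem_closedBall, dist_eq_norm] using hR k
  obtain ⟨a, _, φ, hφ, hat⟩ :=
    tendsto_subseq_of_bounded Metric.isBounded_closedBall hxball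
  have haK₀ : a ∈ K₀ := hK₀closed.isSeqClosed (fun k => hx (φ k)) hat
  have hyt : Tendsto (fun k => y (φ k)) atTop (𝓝 (z - a)) := by
    have : (fun k => y (φ k)) = fun k => u (φ k) - x (φ k) := by
      funext k; rw [← hxy (φ k)]; abel
    rw [this]
    exact (hz.comp hφ.tendsto_atTop).sub hat
  have hbK₁ : z - a ∈ K₁ := hK₁closed.isSeqClosed (fun k => hy (φ k)) hyt
  have := Set.add_mem_add haK₀ hbK₁
  simpa using this
end

section
/- Let $C \subset \mathbb{R}^n$ be a pointed closed convex cone with nonempty interior, and let $A_0 = C \setminus K_0$, $A_1 = C \setminus K_1$ be $C$-coconvex sets (i.e., $K_0, K_1 \subseteq C$ are closed convex and $A_0, A_1$ have positive finite Lebesgue measure). Then for $\lambda \in (0,1)$, the set $(1-\lambda)A_0 \oplus \lambda A_1 := C \setminus ((1-\lambda)K_0 + \lambda K_1)$ satisfies the reversed Brunn–Minkowski inequality: $V_n((1-\lambda)A_0 \oplus \lambda A_1)^{1/n} \le (1-\lambda)V_n(A_0)^{1/n} + \lambda V_n(A_1)^{1/n}$. -/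
open Set Pointwise MeasureTheory Metric
open scoped ENNReal NNReal

noncomputable section CoconvexAux

variable {E : Type*} [NormedAddCommGroup E] [NormedSpace ℝ E]

/-- The ray through `x` hits `K`. -/
def CoconvexAux.hits (K : Set E) (x : E) : Prop := ∃ t : ℝ, 0 ≤ t ∧ t • x ∈ K

/-- First entry parameter of the ray through `x` into `K`. -/
noncomputable def CoconvexAux.radR (K : Set E) (x : E) : ℝ := sInf {t : ℝ | 0 ≤ t ∧ t • x ∈ K}

open Classical in
/-- Radial entry function with value `⊤` when the ray misses `K`. -/
noncomputable def CoconvexAux.rho (K : Set E) (x : E) : ℝ≥0∞ :=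
  if CoconvexAux.hits K x then ENNReal.ofReal (CoconvexAux.radR K x) else ⊤

namespace CoconvexAux

lemma setK_closed {K : Set E} (hK : IsClosed K) (x : E) : IsClosed {t : ℝ | 0 ≤ t ∧ t • x ∈ K} := by
  have : {t : ℝ | 0 ≤ t ∧ t • x ∈ K} = Ici (0:ℝ) ∩ (fun t : ℝ => t • x) ⁻¹' K := rfl
  rw [this]
  exact isClosed_Ici.inter (hK.preimage (continuous_id.smul continuous_const))

lemma radR_bddBelow (K : Set E) (x : E) : BddBelow {t : ℝ | 0 ≤ t ∧ t • x ∈ K} :=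
  ⟨0, fun _ hy => hy.1⟩

lemma radR_mem {K : Set E} (hK : IsClosed K) {x : E} (h : hits K x) :
    0 ≤ radR K x ∧ radR K x • x ∈ K := by
  obtain ⟨t, ht⟩ := h
  have := (setK_closed hK x).csInf_mem ⟨t, ht⟩ (radR_bddBelow K x)
  exact this

lemma radR_le {K : Set E} {x : E} {t : ℝ} (h0 : 0 ≤ t) (ht : t • x ∈ K) : radR K x ≤ t :=
  csInf_le (radR_bddBelow K x) ⟨h0, ht⟩

lemma not_mem_of_lt_radR {K : Set E} {x : E} {t : ℝ} (h0 : 0 ≤ t) (h : t < radR K x) :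
    t • x ∉ K := fun hm => absurd (radR_le h0 hm) (not_le.2 h)

lemma sublevel_closed {K : Set E} (hK : IsClosed K) (c : ℝ) :
    IsClosed {x : E | ∃ t : ℝ, (0 ≤ t ∧ t ≤ c) ∧ t • x ∈ K} := by
  apply IsSeqClosed.isClosed
  intro xs p hmem htend
  choose t ht1 ht2 using hmem
  have htI : ∀ n, t n ∈ Icc 0 c := fun n => ⟨(ht1 n).1, (ht1 n).2⟩
  obtain ⟨a, ha, φ, hφ, hta⟩ := isCompact_Icc.tendsto_subseq htI
  refine ⟨a, ⟨ha.1, ha.2⟩, ?_⟩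
  have hlim : Filter.Tendsto (fun n => t (φ n) • xs (φ n)) Filter.atTop (nhds (a • p)) :=
    hta.smul (htend.comp hφ.tendsto_atTop)
  exact hK.mem_of_tendsto hlim (Filter.Eventually.of_forall fun n => ht2 (φ n))

lemma measurable_rho [MeasurableSpace E] [BorelSpace E] {K : Set E} (hK : IsClosed K) :
    Measurable (rho K) := by
  apply measurable_of_Iic
  intro y
  rcases eq_or_ne y ⊤ with rfl | hy
  · simp
  · have hset : rho K ⁻¹' Iic y = {x : E | ∃ t : ℝ, (0 ≤ t ∧ t ≤ y.toReal) ∧ t • x ∈ K} := by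
      ext x
      simp only [mem_preimage, mem_Iic, mem_setOf_eq, rho]
      constructor
      · intro hx
        split_ifs at hx with hh
        · obtain ⟨h0, hmem⟩ := radR_mem hK hh
          exact ⟨radR K x, ⟨h0, (ENNReal.ofReal_le_iff_le_toReal hy).1 hx⟩, hmem⟩
        · exact absurd (top_le_iff.1 hx) hy
      · rintro ⟨t, ⟨h0, hc⟩, hmem⟩
        rw [if_pos ⟨t, h0, hmem⟩]
        exact le_trans (ENNReal.ofReal_le_ofReal (radR_le h0 hmem))
          (ENNReal.ofReal_le_of_le_toReal hc)
    rw [hset]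
    exact (sublevel_closed hK _).measurableSet

lemma rho_eq_ofReal {K : Set E} {x : E} (h : hits K x) :
    rho K x = ENNReal.ofReal (radR K x) := if_pos h

end CoconvexAux

end CoconvexAux

namespace CoconvexAux

open MeasureTheory.Measure

lemma volumeIoiPow_tail (N : ℕ) (c : ℝ) :
    volumeIoiPow N {r : Ioi (0:ℝ) | c < (r:ℝ)} = ⊤ := by
  have hSm : MeasurableSet {r : Ioi (0:ℝ) | c < (r:ℝ)} :=
    measurableSet_Ioi.preimage measurable_subtype_coe
  have himg : (Subtype.val '' {r : Ioi (0:ℝ) | c < (r:ℝ)}) = Ioi (max 0 c) := by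
    have h : {r : Ioi (0:ℝ) | c < (r:ℝ)} = Subtype.val ⁻¹' Ioi c := rfl
    rw [h, Subtype.image_preimage_val, Ioi_inter_Ioi]
  rw [volumeIoiPow, withDensity_apply _ hSm,
    setLIntegral_subtype measurableSet_Ioi _ (fun a : ℝ => ENNReal.ofReal (a ^ N)), himg]
  set b := max 0 c with hb
  have hmono : ∫⁻ x in Ioi (b + 1), (1 : ℝ≥0∞) ∂volume ≤
      ∫⁻ x in Ioi b, ENNReal.ofReal (x ^ N) ∂volume := by
    have h1 : ∫⁻ x in Ioi (b + 1), (1 : ℝ≥0∞) ∂volume ≤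
        ∫⁻ x in Ioi (b + 1), ENNReal.ofReal (x ^ N) ∂volume := by
      refine setLIntegral_mono (g := fun x => ENNReal.ofReal (x ^ N)) (by fun_prop) ?_
      intro x hx
      have hb0 : (0:ℝ) ≤ b := le_max_left _ _
      have hx1 : (1:ℝ) ≤ x := by have := mem_Ioi.1 hx; linarith
      simpa using ENNReal.one_le_ofReal.2 (one_le_pow₀ hx1)
    exact le_trans h1 (lintegral_mono_set (Ioi_subset_Ioi (by linarith)))
  rw [setLIntegral_one, Real.volume_Ioi] at hmono
  exact top_le_iff.1 hmono

lemma volumeIoiPow_lt (N : ℕ) {a : ℝ} (ha : 0 ≤ a) :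
    volumeIoiPow N {r : Ioi (0:ℝ) | (r:ℝ) < a} =
      ENNReal.ofReal (a ^ (N + 1) / (N + 1)) := by
  rcases eq_or_lt_of_le ha with rfl | ha'
  · have h : {r : Ioi (0:ℝ) | (r:ℝ) < (0:ℝ)} = (∅ : Set (Ioi (0:ℝ))) := by
      ext r
      simp only [mem_setOf_eq, mem_empty_iff_false, iff_false, not_lt]
      exact le_of_lt r.2
    rw [h]
    simp [zero_pow (Nat.succ_ne_zero N)]
  · have h : {r : Ioi (0:ℝ) | (r:ℝ) < a} = Iio (⟨a, ha'⟩ : Ioi (0:ℝ)) := by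
      ext r
      simp only [mem_setOf_eq, mem_Iio]
      exact Iff.rfl
    rw [h, volumeIoiPow_apply_Iio]

variable {E : Type*} [NormedAddCommGroup E] [NormedSpace ℝ E]

/-- Structure of rays through points of `C` when the coconvex section has finite measure. -/
lemma key {C K : Set E} (hC_cone : ∀ x ∈ C, ∀ r : ℝ, 0 ≤ r → r • x ∈ C)
    (hKclosed : IsClosed K) (hKconv : Convex ℝ K) {u : E} (huC : u ∈ C)
    {ν : Measure (Ioi (0:ℝ))}
    (htail : ∀ c : ℝ, ν {r : Ioi (0:ℝ) | c < (r:ℝ)} = ⊤)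
    (hne : ν {r : Ioi (0:ℝ) | (r:ℝ) • u ∈ C \ K} ≠ ⊤) :
    hits K u ∧ ∀ r : ℝ, radR K u ≤ r → r • u ∈ K := by
  have hmemC : ∀ r : Ioi (0:ℝ), (r:ℝ) • u ∈ C := fun r => hC_cone u huC r (le_of_lt r.2)
  have hhit : hits K u := by
    by_contra hno
    apply hne
    rw [← top_le_iff, ← htail 0]
    refine measure_mono fun r hr => ?_
    exact ⟨hmemC r, fun hK' => hno ⟨(r:ℝ), le_of_lt r.2, hK'⟩⟩
  refine ⟨hhit, fun r hr => ?_⟩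
  obtain ⟨ha0, hamem⟩ := radR_mem hKclosed hhit
  rcases eq_or_lt_of_le hr with rfl | har
  · exact hamem
  · by_contra hout
    apply hne
    rw [← top_le_iff, ← htail r]
    refine measure_mono fun s hs => ?_
    refine ⟨hmemC s, fun hsK => hout ?_⟩
    have hs' : r < (s:ℝ) := hs
    have has : radR K u < (s:ℝ) := lt_trans har hs'
    have hsa : (s:ℝ) - radR K u ≠ 0 := ne_of_gt (by linarith)
    set μ : ℝ := (r - radR K u) / ((s:ℝ) - radR K u) with hμ
    have hμ0 : 0 ≤ μ := div_nonneg (by linarith) (by linarith)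
    have hμ1 : 0 ≤ 1 - μ := by
      have hle : μ ≤ 1 := by
        rw [hμ, div_le_one (by linarith)]; linarith
      linarith
    have hcomb := hKconv hamem hsK hμ1 hμ0 (by ring)
    have heq : (1 - μ) • (radR K u • u) + μ • ((s:ℝ) • u) = r • u := by
      rw [smul_smul, smul_smul, ← add_smul]
      congr 1
      have hmul : μ * ((s:ℝ) - radR K u) = r - radR K u := div_mul_cancel₀ _ hsa
      nlinarith [hmul]
    rwa [heq] at hcomb

end CoconvexAux

section MainProof

open CoconvexAux

/-- Complemented Brunn–Minkowski inequality for `C`-coconvex sets. -/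
theorem coconvex_brunn_minkowski {n : ℕ}
    (C K₀ K₁ : Set (EuclideanSpace ℝ (Fin n)))
    (hC_closed : IsClosed C) (hC_conv : Convex ℝ C)
    (hC_cone : ∀ x ∈ C, ∀ r : ℝ, 0 ≤ r → r • x ∈ C)
    (hC_pointed : C ∩ (-C) = {0})
    (hC_int : (interior C).Nonempty)
    (hK₀C : K₀ ⊆ C) (hK₀closed : IsClosed K₀) (hK₀conv : Convex ℝ K₀)
    (hK₁C : K₁ ⊆ C) (hK₁closed : IsClosed K₁) (hK₁conv : Convex ℝ K₁)
    (hA₀pos : 0 < volume (C \ K₀)) (hA₀fin : volume (C \ K₀) < ⊤)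
    (hA₁pos : 0 < volume (C \ K₁)) (hA₁fin : volume (C \ K₁) < ⊤)
    (l : ℝ) (hl0 : 0 < l) (hl1 : l < 1) :
    (volume (C \ ((1 - l) • K₀ + l • K₁))) ^ ((1 : ℝ) / n) ≤
      ENNReal.ofReal (1 - l) * (volume (C \ K₀)) ^ ((1 : ℝ) / n) +
        ENNReal.ofReal l * (volume (C \ K₁)) ^ ((1 : ℝ) / n) := by
  classical
  rcases Nat.eq_zero_or_pos n with hn | hn
  · have hz : ((1:ℝ) / (n:ℝ)) = 0 := by subst hn; norm_num
    rw [hz]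
    simp only [ENNReal.rpow_zero, mul_one]
    rw [← ENNReal.ofReal_add (by linarith) hl0.le, sub_add_cancel, ENNReal.ofReal_one]
  haveI hFinNe : Nonempty (Fin n) := ⟨⟨0, hn⟩⟩
  haveI hNT : Nontrivial (EuclideanSpace ℝ (Fin n)) := inferInstance
  have h1l : (0:ℝ) < 1 - l := by linarith
  -- the convex sum and its closure
  set D : Set (EuclideanSpace ℝ (Fin n)) := (1 - l) • K₀ + l • K₁ with hDdef
  have hDconv : Convex ℝ D := (hK₀conv.smul _).add (hK₁conv.smul _)
  have hfr : volume (frontier D) = 0 := hDconv.addHaar_frontier volume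
  set Db := closure D with hDbdef
  have hDbclosed : IsClosed Db := isClosed_closure
  have hvol_sub : volume (C \ D) ≤ volume (C \ Db) := by
    have hsub : C \ D ⊆ (C \ Db) ∪ frontier D := by
      rintro x ⟨hxC, hxD⟩
      by_cases hx : x ∈ Db
      · right
        rw [← closure_diff_interior]
        exact ⟨hx, fun hint => hxD (interior_subset hint)⟩
      · exact Or.inl ⟨hxC, hx⟩
    calc volume (C \ D) ≤ volume ((C \ Db) ∪ frontier D) := measure_mono hsub
      _ ≤ volume (C \ Db) + volume (frontier D) := measure_union_le _ _
      _ = volume (C \ Db) := by rw [hfr, add_zero]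
  -- polar decomposition machinery
  set σm := (volume : Measure (EuclideanSpace ℝ (Fin n))).toSphere with hσm
  set νm := Measure.volumeIoiPow (Module.finrank ℝ (EuclideanSpace ℝ (Fin n)) - 1) with hνm
  have hdim : Module.finrank ℝ (EuclideanSpace ℝ (Fin n)) = n := finrank_euclideanSpace_fin
  have hdim1 : Module.finrank ℝ (EuclideanSpace ℝ (Fin n)) - 1 + 1 = n := by
    rw [hdim]; exact Nat.sub_add_cancel hn
  have htail : ∀ c : ℝ, νm {r : Ioi (0:ℝ) | c < (r:ℝ)} = ⊤ := fun c =>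
    CoconvexAux.volumeIoiPow_tail _ c
  have hνlt : ∀ a : ℝ, 0 ≤ a →
      νm {r : Ioi (0:ℝ) | (r:ℝ) < a} = ENNReal.ofReal (a ^ n / n) := by
    intro a ha
    rw [hνm, CoconvexAux.volumeIoiPow_lt _ ha]
    congr 2
    · rw [hdim1]
    · norm_cast
  -- measurability of the "polar" sets
  have hBA : ∀ A : Set (EuclideanSpace ℝ (Fin n)), MeasurableSet A →
      MeasurableSet {p : sphere (0 : EuclideanSpace ℝ (Fin n)) 1 × Ioi (0:ℝ) |
        ((p.2 : ℝ)) • (p.1 : EuclideanSpace ℝ (Fin n)) ∈ A} := by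
    intro A hA
    have hcont : Continuous fun p : sphere (0 : EuclideanSpace ℝ (Fin n)) 1 × Ioi (0:ℝ) =>
        ((p.2 : ℝ)) • (p.1 : EuclideanSpace ℝ (Fin n)) :=
      (continuous_subtype_val.comp continuous_snd).smul
        (continuous_subtype_val.comp continuous_fst)
    exact hA.preimage hcont.measurable
  -- the polar-coordinates volume formula
  have volume_eq : ∀ A : Set (EuclideanSpace ℝ (Fin n)), MeasurableSet A →
      volume A = ∫⁻ u, νm {r : Ioi (0:ℝ) |
        (r:ℝ) • (u : EuclideanSpace ℝ (Fin n)) ∈ A} ∂σm := by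
    intro A hA
    have hmp := Measure.measurePreserving_homeomorphUnitSphereProd
      (volume : Measure (EuclideanSpace ℝ (Fin n)))
    have hpre := hmp.measure_preimage (hBA A hA).nullMeasurableSet
    have hpreim : (homeomorphUnitSphereProd (EuclideanSpace ℝ (Fin n))) ⁻¹'
        {p : sphere (0 : EuclideanSpace ℝ (Fin n)) 1 × Ioi (0:ℝ) |
          ((p.2 : ℝ)) • (p.1 : EuclideanSpace ℝ (Fin n)) ∈ A} = Subtype.val ⁻¹' A := by
      ext x
      simp only [mem_preimage, mem_setOf_eq]
      have hx0 : (x : EuclideanSpace ℝ (Fin n)) ≠ 0 := x.2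
      have hxe : ((homeomorphUnitSphereProd (EuclideanSpace ℝ (Fin n)) x).2 : ℝ) •
          ((homeomorphUnitSphereProd (EuclideanSpace ℝ (Fin n)) x).1 :
            EuclideanSpace ℝ (Fin n)) = (x : EuclideanSpace ℝ (Fin n)) := by
        rw [homeomorphUnitSphereProd_apply_fst_coe, homeomorphUnitSphereProd_apply_snd_coe]
        exact smul_inv_smul₀ (norm_ne_zero_iff.2 hx0) _
      rw [hxe]
    have hcomap : (volume : Measure (EuclideanSpace ℝ (Fin n))).comap Subtype.val
        ((Subtype.val ⁻¹' A : Set ((({0}ᶜ : Set (EuclideanSpace ℝ (Fin n))))))) =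
          volume (A \ {0}) := by
      rw [comap_subtype_coe_apply
        ((measurableSet_singleton (0 : EuclideanSpace ℝ (Fin n))).compl),
        Subtype.image_preimage_coe, Set.inter_comm, ← Set.diff_eq]
    rw [hpreim, hcomap] at hpre
    rw [← measure_diff_null (s := A) (measure_singleton (0 : EuclideanSpace ℝ (Fin n))), hpre,
      Measure.prod_apply (hBA A hA)]
    rfl
  -- measurability of the section functions
  have hmeas_sec : ∀ A : Set (EuclideanSpace ℝ (Fin n)), MeasurableSet A →
      Measurable (fun u : sphere (0 : EuclideanSpace ℝ (Fin n)) 1 =>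
        νm {r : Ioi (0:ℝ) | (r:ℝ) • (u : EuclideanSpace ℝ (Fin n)) ∈ A}) := by
    intro A hA
    exact measurable_measure_prodMk_left (hBA A hA)
  have hA₀m : MeasurableSet (C \ K₀) := hC_closed.measurableSet.diff hK₀closed.measurableSet
  have hA₁m : MeasurableSet (C \ K₁) := hC_closed.measurableSet.diff hK₁closed.measurableSet
  have hADm : MeasurableSet (C \ Db) := hC_closed.measurableSet.diff hDbclosed.measurableSet
  -- the null set of directions with infinite sections
  have hMnull : ∀ A : Set (EuclideanSpace ℝ (Fin n)), MeasurableSet A → volume A < ⊤ →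
      σm {u : sphere (0 : EuclideanSpace ℝ (Fin n)) 1 |
        νm {r : Ioi (0:ℝ) | (r:ℝ) • (u : EuclideanSpace ℝ (Fin n)) ∈ A} = ⊤} = 0 := by
    intro A hA hfin
    set g := fun u : sphere (0 : EuclideanSpace ℝ (Fin n)) 1 =>
      νm {r : Ioi (0:ℝ) | (r:ℝ) • (u : EuclideanSpace ℝ (Fin n)) ∈ A} with hg
    have hgm : Measurable g := hmeas_sec A hA
    have hMm : MeasurableSet {u | g u = ⊤} := hgm (measurableSet_singleton ⊤)
    have h1 : ∫⁻ u in {u | g u = ⊤}, g u ∂σm ≤ volume A := by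
      rw [volume_eq A hA]
      exact setLIntegral_le_lintegral _ _
    have h2 : ∫⁻ u in {u | g u = ⊤}, g u ∂σm = ⊤ * σm {u | g u = ⊤} := by
      rw [setLIntegral_congr_fun hMm (fun u hu => hu)]
      exact setLIntegral_const _ _
    by_contra hne
    rw [h2, ENNReal.top_mul hne] at h1
    exact hfin.ne (top_le_iff.1 h1)
  -- null direction sets
  set M₀ : Set (sphere (0 : EuclideanSpace ℝ (Fin n)) 1) :=
    {u | νm {r : Ioi (0:ℝ) | (r:ℝ) • (u : EuclideanSpace ℝ (Fin n)) ∈ C \ K₀} = ⊤} with hM₀def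
  set M₁ : Set (sphere (0 : EuclideanSpace ℝ (Fin n)) 1) :=
    {u | νm {r : Ioi (0:ℝ) | (r:ℝ) • (u : EuclideanSpace ℝ (Fin n)) ∈ C \ K₁} = ⊤} with hM₁def
  have hM₀m : MeasurableSet M₀ := (hmeas_sec _ hA₀m) (measurableSet_singleton ⊤)
  have hM₁m : MeasurableSet M₁ := (hmeas_sec _ hA₁m) (measurableSet_singleton ⊤)
  have hM₀null : σm M₀ = 0 := hMnull _ hA₀m hA₀fin
  have hM₁null : σm M₁ = 0 := hMnull _ hA₁m hA₁fin
  set Cs : Set (sphere (0 : EuclideanSpace ℝ (Fin n)) 1) :=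
    {u | (u : EuclideanSpace ℝ (Fin n)) ∈ C} with hCsdef
  have hCsm : MeasurableSet Cs := measurable_subtype_coe hC_closed.measurableSet
  set G := Cs ∩ (M₀ ∪ M₁)ᶜ with hGdef
  have hGm : MeasurableSet G := hCsm.inter (hM₀m.union hM₁m).compl
  -- ray structure on good directions
  have hkey₀ : ∀ u ∈ G, CoconvexAux.hits K₀ (u : EuclideanSpace ℝ (Fin n)) ∧
      ∀ r : ℝ, CoconvexAux.radR K₀ (u : EuclideanSpace ℝ (Fin n)) ≤ r →
        r • (u : EuclideanSpace ℝ (Fin n)) ∈ K₀ := by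
    intro u hu
    exact CoconvexAux.key hC_cone hK₀closed hK₀conv hu.1 htail (fun h => hu.2 (Or.inl h))
  have hkey₁ : ∀ u ∈ G, CoconvexAux.hits K₁ (u : EuclideanSpace ℝ (Fin n)) ∧
      ∀ r : ℝ, CoconvexAux.radR K₁ (u : EuclideanSpace ℝ (Fin n)) ≤ r →
        r • (u : EuclideanSpace ℝ (Fin n)) ∈ K₁ := by
    intro u hu
    exact CoconvexAux.key hC_cone hK₁closed hK₁conv hu.1 htail (fun h => hu.2 (Or.inr h))
  -- radial functions
  set ρ₀ : sphere (0 : EuclideanSpace ℝ (Fin n)) 1 → ℝ≥0∞ :=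
    fun u => CoconvexAux.rho K₀ (u : EuclideanSpace ℝ (Fin n)) with hρ₀def
  set ρ₁ : sphere (0 : EuclideanSpace ℝ (Fin n)) 1 → ℝ≥0∞ :=
    fun u => CoconvexAux.rho K₁ (u : EuclideanSpace ℝ (Fin n)) with hρ₁def
  have hρ₀m : Measurable ρ₀ :=
    (CoconvexAux.measurable_rho hK₀closed).comp measurable_subtype_coe
  have hρ₁m : Measurable ρ₁ :=
    (CoconvexAux.measurable_rho hK₁closed).comp measurable_subtype_coe
  set c₀ := ENNReal.ofReal (1 - l) with hc₀def
  set c₁ := ENNReal.ofReal l with hc₁def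
  set Ninv := ((n : ℝ≥0∞))⁻¹ with hNinvdef
  set p : ℝ := ((n:ℕ) : ℝ) with hpdef
  have hppos : (0:ℝ) < p := by rw [hpdef]; exact_mod_cast hn
  have hp1 : (1:ℝ) ≤ p := by rw [hpdef]; exact_mod_cast hn
  have hp0 : p ≠ 0 := ne_of_gt hppos
  have hip : (0:ℝ) ≤ 1 / p := by positivity
  have hconv : ∀ a : ℝ, 0 ≤ a →
      ENNReal.ofReal (a ^ n / n) = ENNReal.ofReal a ^ p * Ninv := by
    intro a ha
    rw [hpdef, ENNReal.rpow_natCast, div_eq_mul_inv, ENNReal.ofReal_mul (pow_nonneg ha n),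
      ENNReal.ofReal_pow ha, ENNReal.ofReal_inv_of_pos (by exact_mod_cast hn),
      ENNReal.ofReal_natCast, hNinvdef]
  have hpow : ∀ f : sphere (0 : EuclideanSpace ℝ (Fin n)) 1 → ℝ≥0∞, Measurable f →
      Measurable (fun u => f u ^ p) := by
    intro f hf
    have h : (fun u => f u ^ p) = fun u => f u ^ (n:ℕ) := by
      funext u; rw [hpdef, ENNReal.rpow_natCast]
    rw [h]
    exact hf.pow_const n
  -- pointwise upper bound for the co-sum sections on G
  have hub : ∀ u ∈ G, νm {r : Ioi (0:ℝ) |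
      (r:ℝ) • (u : EuclideanSpace ℝ (Fin n)) ∈ C \ Db} ≤
        (c₀ * ρ₀ u + c₁ * ρ₁ u) ^ p * Ninv := by
    intro u hu
    obtain ⟨hit₀, up₀⟩ := hkey₀ u hu
    obtain ⟨hit₁, up₁⟩ := hkey₁ u hu
    have ha₀ : 0 ≤ CoconvexAux.radR K₀ (u : EuclideanSpace ℝ (Fin n)) :=
      (CoconvexAux.radR_mem hK₀closed hit₀).1
    have ha₁ : 0 ≤ CoconvexAux.radR K₁ (u : EuclideanSpace ℝ (Fin n)) :=
      (CoconvexAux.radR_mem hK₁closed hit₁).1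
    set a₀ := CoconvexAux.radR K₀ (u : EuclideanSpace ℝ (Fin n)) with ha₀def
    set a₁ := CoconvexAux.radR K₁ (u : EuclideanSpace ℝ (Fin n)) with ha₁def
    have hm0 : 0 ≤ (1 - l) * a₀ + l * a₁ :=
      add_nonneg (mul_nonneg h1l.le ha₀) (mul_nonneg hl0.le ha₁)
    have hsub2 : {r : Ioi (0:ℝ) | (r:ℝ) • (u : EuclideanSpace ℝ (Fin n)) ∈ C \ Db} ⊆
        {r : Ioi (0:ℝ) | (r:ℝ) < (1 - l) * a₀ + l * a₁} := by
      intro r hr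
      by_contra hge
      rw [mem_setOf_eq, not_lt] at hge
      apply hr.2
      apply subset_closure
      have hs₀ : a₀ ≤ a₀ + ((r:ℝ) - ((1 - l) * a₀ + l * a₁)) / (1 - l) :=
        le_add_of_nonneg_right (div_nonneg (by linarith) h1l.le)
      have mem₀ := up₀ _ hs₀
      have mem₁ := up₁ _ le_rfl
      have hDmem : (1 - l) • ((a₀ + ((r:ℝ) - ((1 - l) * a₀ + l * a₁)) / (1 - l)) •
            (u : EuclideanSpace ℝ (Fin n))) +
          l • (a₁ • (u : EuclideanSpace ℝ (Fin n))) ∈ (1 - l) • K₀ + l • K₁ :=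
        Set.add_mem_add (Set.smul_mem_smul_set mem₀) (Set.smul_mem_smul_set mem₁)
      have heq : (1 - l) • ((a₀ + ((r:ℝ) - ((1 - l) * a₀ + l * a₁)) / (1 - l)) •
            (u : EuclideanSpace ℝ (Fin n))) +
          l • (a₁ • (u : EuclideanSpace ℝ (Fin n))) =
          (r:ℝ) • (u : EuclideanSpace ℝ (Fin n)) := by
        rw [smul_smul, smul_smul, ← add_smul]
        congr 1
        field_simp
        ring
      rw [heq] at hDmem
      exact hDmem
    calc νm {r : Ioi (0:ℝ) | (r:ℝ) • (u : EuclideanSpace ℝ (Fin n)) ∈ C \ Db}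
        ≤ νm {r : Ioi (0:ℝ) | (r:ℝ) < (1 - l) * a₀ + l * a₁} := measure_mono hsub2
      _ = ENNReal.ofReal (((1 - l) * a₀ + l * a₁) ^ n / n) := hνlt _ hm0
      _ = ENNReal.ofReal ((1 - l) * a₀ + l * a₁) ^ p * Ninv := hconv _ hm0
      _ = (c₀ * ρ₀ u + c₁ * ρ₁ u) ^ p * Ninv := by
          rw [ENNReal.ofReal_add (mul_nonneg h1l.le ha₀) (mul_nonneg hl0.le ha₁),
            ENNReal.ofReal_mul h1l.le, ENNReal.ofReal_mul hl0.le]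
          simp only [hρ₀def, hρ₁def, hc₀def, hc₁def]
          rw [CoconvexAux.rho_eq_ofReal hit₀, CoconvexAux.rho_eq_ofReal hit₁]
  -- pointwise lower bound for the summand sections on G
  have hlbgen : ∀ K : Set (EuclideanSpace ℝ (Fin n)), IsClosed K →
      ∀ u : sphere (0 : EuclideanSpace ℝ (Fin n)) 1, (u : EuclideanSpace ℝ (Fin n)) ∈ C →
      CoconvexAux.hits K (u : EuclideanSpace ℝ (Fin n)) →
      ENNReal.ofReal (CoconvexAux.radR K (u : EuclideanSpace ℝ (Fin n))) ^ p * Ninv ≤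
        νm {r : Ioi (0:ℝ) | (r:ℝ) • (u : EuclideanSpace ℝ (Fin n)) ∈ C \ K} := by
    intro K hKc u huC hhit
    have ha := (CoconvexAux.radR_mem hKc hhit).1
    have hsub2 : {r : Ioi (0:ℝ) | (r:ℝ) < CoconvexAux.radR K (u : EuclideanSpace ℝ (Fin n))} ⊆
        {r : Ioi (0:ℝ) | (r:ℝ) • (u : EuclideanSpace ℝ (Fin n)) ∈ C \ K} := by
      intro r hr
      exact ⟨hC_cone _ huC _ (le_of_lt r.2),
        CoconvexAux.not_mem_of_lt_radR (le_of_lt r.2) hr⟩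
    calc ENNReal.ofReal (CoconvexAux.radR K (u : EuclideanSpace ℝ (Fin n))) ^ p * Ninv
        = ENNReal.ofReal ((CoconvexAux.radR K (u : EuclideanSpace ℝ (Fin n))) ^ n / n) :=
          (hconv _ ha).symm
      _ = νm {r : Ioi (0:ℝ) | (r:ℝ) < CoconvexAux.radR K (u : EuclideanSpace ℝ (Fin n))} :=
          (hνlt _ ha).symm
      _ ≤ νm {r : Ioi (0:ℝ) | (r:ℝ) • (u : EuclideanSpace ℝ (Fin n)) ∈ C \ K} :=
          measure_mono hsub2
  -- the complement of G contributes nothing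
  have hGc0 : ∫⁻ u in Gᶜ, νm {r : Ioi (0:ℝ) |
      (r:ℝ) • (u : EuclideanSpace ℝ (Fin n)) ∈ C \ Db} ∂σm = 0 := by
    have hGcEq : Gᶜ = Csᶜ ∪ (M₀ ∪ M₁) := by rw [hGdef, Set.compl_inter, compl_compl]
    have hCs0 : ∫⁻ u in Csᶜ, νm {r : Ioi (0:ℝ) |
        (r:ℝ) • (u : EuclideanSpace ℝ (Fin n)) ∈ C \ Db} ∂σm = 0 := by
      rw [setLIntegral_congr_fun (g := fun _ => (0:ℝ≥0∞)) hCsm.compl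
        (fun u hu => ?_)]
      · simp
      · have hemp : {r : Ioi (0:ℝ) |
            (r:ℝ) • (u : EuclideanSpace ℝ (Fin n)) ∈ C \ Db} = ∅ := by
          ext r
          simp only [mem_setOf_eq, mem_empty_iff_false, iff_false]
          rintro ⟨hrC, -⟩
          apply hu
          have h2 := hC_cone _ hrC (r:ℝ)⁻¹ (inv_nonneg.2 (le_of_lt r.2))
          rw [inv_smul_smul₀ (ne_of_gt r.2)] at h2
          exact h2
        rw [hemp, measure_empty]
    have hMM0 : ∫⁻ u in M₀ ∪ M₁, νm {r : Ioi (0:ℝ) |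
        (r:ℝ) • (u : EuclideanSpace ℝ (Fin n)) ∈ C \ Db} ∂σm = 0 :=
      setLIntegral_measure_zero _ _ (measure_union_null hM₀null hM₁null)
    refine le_antisymm ?_ zero_le
    calc ∫⁻ u in Gᶜ, νm {r : Ioi (0:ℝ) |
          (r:ℝ) • (u : EuclideanSpace ℝ (Fin n)) ∈ C \ Db} ∂σm
        = ∫⁻ u in Csᶜ ∪ (M₀ ∪ M₁), νm {r : Ioi (0:ℝ) |
          (r:ℝ) • (u : EuclideanSpace ℝ (Fin n)) ∈ C \ Db} ∂σm := by rw [hGcEq]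
      _ ≤ ∫⁻ u in Csᶜ, νm {r : Ioi (0:ℝ) |
            (r:ℝ) • (u : EuclideanSpace ℝ (Fin n)) ∈ C \ Db} ∂σm +
          ∫⁻ u in M₀ ∪ M₁, νm {r : Ioi (0:ℝ) |
            (r:ℝ) • (u : EuclideanSpace ℝ (Fin n)) ∈ C \ Db} ∂σm :=
          lintegral_union_le _ _ _
      _ = 0 := by rw [hCs0, hMM0, add_zero]
  have hvolDb : volume (C \ Db) = ∫⁻ u in G, νm {r : Ioi (0:ℝ) |
      (r:ℝ) • (u : EuclideanSpace ℝ (Fin n)) ∈ C \ Db} ∂σm := by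
    rw [volume_eq _ hADm, ← lintegral_add_compl
      (fun u : sphere (0 : EuclideanSpace ℝ (Fin n)) 1 => νm {r : Ioi (0:ℝ) |
        (r:ℝ) • (u : EuclideanSpace ℝ (Fin n)) ∈ C \ Db}) hGm, hGc0, add_zero]
  -- main integral bound
  have hFm : Measurable fun u => c₀ * ρ₀ u + c₁ * ρ₁ u :=
    (hρ₀m.const_mul _).add (hρ₁m.const_mul _)
  have hIub : volume (C \ Db) ≤
      (∫⁻ u in G, (c₀ * ρ₀ u + c₁ * ρ₁ u) ^ p ∂σm) * Ninv := by
    rw [hvolDb, ← lintegral_mul_const _ (hpow _ hFm)]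
    exact setLIntegral_mono ((hpow _ hFm).mul_const _) hub
  -- Minkowski's inequality
  have hmink := ENNReal.lintegral_Lp_add_le (μ := σm.restrict G)
    (f := fun u => c₀ * ρ₀ u) (g := fun u => c₁ * ρ₁ u)
    ((hρ₀m.const_mul _).aemeasurable) ((hρ₁m.const_mul _).aemeasurable) hp1
  simp only [Pi.add_apply] at hmink
  -- per-term computation
  have hterm : ∀ (c : ℝ≥0∞) (ρ : sphere (0 : EuclideanSpace ℝ (Fin n)) 1 → ℝ≥0∞),
      Measurable ρ →
      (∫⁻ u in G, (c * ρ u) ^ p ∂σm) ^ (1/p) * Ninv ^ (1/p) =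
        c * ((∫⁻ u in G, ρ u ^ p ∂σm) * Ninv) ^ (1/p) := by
    intro c ρ hρ
    have h1 : (fun u => (c * ρ u) ^ p) = fun u => c ^ p * ρ u ^ p := by
      funext u; exact ENNReal.mul_rpow_of_nonneg _ _ hppos.le
    rw [h1, lintegral_const_mul _ (hpow _ hρ), ENNReal.mul_rpow_of_nonneg _ _ hip,
      ← ENNReal.rpow_mul, mul_one_div_cancel hp0, ENNReal.rpow_one, mul_assoc,
      ← ENNReal.mul_rpow_of_nonneg _ _ hip]
  have hI₀ : (∫⁻ u in G, ρ₀ u ^ p ∂σm) * Ninv ≤ volume (C \ K₀) := by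
    rw [← lintegral_mul_const _ (hpow _ hρ₀m)]
    calc ∫⁻ u in G, ρ₀ u ^ p * Ninv ∂σm
        ≤ ∫⁻ u in G, νm {r : Ioi (0:ℝ) |
            (r:ℝ) • (u : EuclideanSpace ℝ (Fin n)) ∈ C \ K₀} ∂σm := by
          refine setLIntegral_mono (hmeas_sec _ hA₀m) fun u hu => ?_
          have := hlbgen K₀ hK₀closed u hu.1 (hkey₀ u hu).1
          simp only [hρ₀def]
          rw [CoconvexAux.rho_eq_ofReal (hkey₀ u hu).1]
          exact this
      _ ≤ ∫⁻ u, νm {r : Ioi (0:ℝ) |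
            (r:ℝ) • (u : EuclideanSpace ℝ (Fin n)) ∈ C \ K₀} ∂σm :=
          setLIntegral_le_lintegral _ _
      _ = volume (C \ K₀) := (volume_eq _ hA₀m).symm
  have hI₁ : (∫⁻ u in G, ρ₁ u ^ p ∂σm) * Ninv ≤ volume (C \ K₁) := by
    rw [← lintegral_mul_const _ (hpow _ hρ₁m)]
    calc ∫⁻ u in G, ρ₁ u ^ p * Ninv ∂σm
        ≤ ∫⁻ u in G, νm {r : Ioi (0:ℝ) |
            (r:ℝ) • (u : EuclideanSpace ℝ (Fin n)) ∈ C \ K₁} ∂σm := by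
          refine setLIntegral_mono (hmeas_sec _ hA₁m) fun u hu => ?_
          have := hlbgen K₁ hK₁closed u hu.1 (hkey₁ u hu).1
          simp only [hρ₁def]
          rw [CoconvexAux.rho_eq_ofReal (hkey₁ u hu).1]
          exact this
      _ ≤ ∫⁻ u, νm {r : Ioi (0:ℝ) |
            (r:ℝ) • (u : EuclideanSpace ℝ (Fin n)) ∈ C \ K₁} ∂σm :=
          setLIntegral_le_lintegral _ _
      _ = volume (C \ K₁) := (volume_eq _ hA₁m).symm
  -- final chain
  calc (volume (C \ D)) ^ ((1:ℝ)/(n:ℝ))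
      ≤ (volume (C \ Db)) ^ (1/p) := ENNReal.rpow_le_rpow hvol_sub hip
    _ ≤ ((∫⁻ u in G, (c₀ * ρ₀ u + c₁ * ρ₁ u) ^ p ∂σm) * Ninv) ^ (1/p) :=
        ENNReal.rpow_le_rpow hIub hip
    _ = (∫⁻ u in G, (c₀ * ρ₀ u + c₁ * ρ₁ u) ^ p ∂σm) ^ (1/p) * Ninv ^ (1/p) :=
        ENNReal.mul_rpow_of_nonneg _ _ hip
    _ ≤ ((∫⁻ u in G, (c₀ * ρ₀ u) ^ p ∂σm) ^ (1/p) +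
          (∫⁻ u in G, (c₁ * ρ₁ u) ^ p ∂σm) ^ (1/p)) * Ninv ^ (1/p) :=
        mul_le_mul_left hmink _
    _ = (∫⁻ u in G, (c₀ * ρ₀ u) ^ p ∂σm) ^ (1/p) * Ninv ^ (1/p) +
        (∫⁻ u in G, (c₁ * ρ₁ u) ^ p ∂σm) ^ (1/p) * Ninv ^ (1/p) := add_mul _ _ _
    _ = c₀ * ((∫⁻ u in G, ρ₀ u ^ p ∂σm) * Ninv) ^ (1/p) +
        c₁ * ((∫⁻ u in G, ρ₁ u ^ p ∂σm) * Ninv) ^ (1/p) := by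
        rw [hterm c₀ ρ₀ hρ₀m, hterm c₁ ρ₁ hρ₁m]
    _ ≤ c₀ * (volume (C \ K₀)) ^ (1/p) + c₁ * (volume (C \ K₁)) ^ (1/p) :=
        add_le_add (mul_le_mul_right (ENNReal.rpow_le_rpow hI₀ hip) _)
          (mul_le_mul_right (ENNReal.rpow_le_rpow hI₁ hip) _)
    _ = ENNReal.ofReal (1 - l) * (volume (C \ K₀)) ^ ((1:ℝ)/(n:ℝ)) +
        ENNReal.ofReal l * (volume (C \ K₁)) ^ ((1:ℝ)/(n:ℝ)) := rfl

end MainProof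
end

section
/- Let $C \subset \mathbb{R}^n$ be a pointed closed convex cone with nonempty interior, and let $K \subseteq C$ be closed and convex such that $A = C \setminus K$ has finite positive Lebesgue measure. Then every ray from the origin through an interior point of $C$ meets the boundary of $A$ exactly once; equivalently, for each $u \in \mathrm{int}\,C$ with $\|u\| = 1$, the set $\{r \ge 0 : ru \in C \setminus K\}$ is an interval of the form $[0, \rho(u))$ or $[0, \rho(u)]$ with $0 < \rho(u) < \infty$. -/
open Set Pointwise MeasureTheory Metric

private lemma coconvex_aux_volume_top {n : ℕ} (hn : 0 < n)
    (A : Set (EuclideanSpace ℝ (Fin n)))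
    (h : ∀ R > (0:ℝ), ∃ x, Metric.ball x R ⊆ A) : volume A = ⊤ := by
  by_contra hfin
  set c := volume (ball (0 : EuclideanSpace ℝ (Fin n)) 1) with hc
  have hcpos : 0 < c := measure_ball_pos volume _ one_pos
  have hcfin : c < ⊤ := measure_ball_lt_top
  have hnontriv : Nontrivial (EuclideanSpace ℝ (Fin n)) :=
    Module.nontrivial_of_finrank_pos (R := ℝ) (by simp [hn])
  set M := (volume A).toReal / c.toReal with hM
  set R := max 1 (M + 1) with hR
  have hR1 : (1:ℝ) ≤ R := le_max_left _ _
  have hRpos : (0:ℝ) < R := lt_of_lt_of_le one_pos hR1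
  obtain ⟨x, hx⟩ := h R hRpos
  have hle : volume (ball x R) ≤ volume A := measure_mono hx
  have hball : volume (ball x R) =
      ENNReal.ofReal (R ^ (Module.finrank ℝ (EuclideanSpace ℝ (Fin n)))) * c :=
    Measure.addHaar_ball volume x hRpos.le
  rw [hball, finrank_euclideanSpace_fin] at hle
  have hRn : R ≤ R ^ n := le_self_pow₀ hR1 hn.ne'
  have hle2 : ENNReal.ofReal R * c ≤ volume A :=
    le_trans (mul_le_mul_left (ENNReal.ofReal_le_ofReal hRn) c) hle
  have h2 : ENNReal.ofReal R ≤ volume A / c :=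
    (ENNReal.le_div_iff_mul_le (Or.inl hcpos.ne') (Or.inl hcfin.ne)).2 hle2
  have h3 : R ≤ ((volume A) / c).toReal :=
    (ENNReal.ofReal_le_iff_le_toReal (ENNReal.div_lt_top hfin hcpos.ne').ne).1 h2
  have h4 : ((volume A) / c).toReal = M := by rw [hM, ENNReal.toReal_div]
  rw [h4] at h3
  have : M + 1 ≤ R := le_max_right _ _
  linarith

/-- Every ray from the origin through an interior point of `C` meets the boundary
of the coconvex set `A = C \ K` exactly once: for each unit vector `u ∈ int C`,
the set `{r ≥ 0 : r • u ∈ C \ K}` is an interval `[0, ρ)` or `[0, ρ]` with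
`0 < ρ < ∞`. -/
theorem coconvex_ray_structure {n : ℕ}
    (C K : Set (EuclideanSpace ℝ (Fin n)))
    (hC_closed : IsClosed C) (hC_conv : Convex ℝ C)
    (hC_cone : ∀ x ∈ C, ∀ r : ℝ, 0 ≤ r → r • x ∈ C)
    (hC_pointed : C ∩ (-C) = {0})
    (hC_int : (interior C).Nonempty)
    (hKC : K ⊆ C) (hKclosed : IsClosed K) (hKconv : Convex ℝ K)
    (hApos : 0 < volume (C \ K)) (hAfin : volume (C \ K) < ⊤)
    (u : EuclideanSpace ℝ (Fin n)) (hu : u ∈ interior C) (hunorm : ‖u‖ = 1) :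
    ∃ ρ : ℝ, 0 < ρ ∧
      ({r : ℝ | 0 ≤ r ∧ r • u ∈ C \ K} = Set.Ico 0 ρ ∨
       {r : ℝ | 0 ≤ r ∧ r • u ∈ C \ K} = Set.Icc 0 ρ) := by
  classical
  have hune : u ≠ 0 := by
    intro h; rw [h, norm_zero] at hunorm; exact one_ne_zero hunorm.symm
  have hn : 0 < n := by
    rcases Nat.eq_zero_or_pos n with h | h
    · subst h; exact absurd (Subsingleton.elim u 0) hune
    · exact h
  have huC : u ∈ C := interior_subset hu
  have h0C : (0 : EuclideanSpace ℝ (Fin n)) ∈ C := by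
    simpa using hC_cone u huC 0 le_rfl
  have hray : ∀ r : ℝ, 0 ≤ r → r • u ∈ C := fun r hr => hC_cone u huC r hr
  -- ball around u inside C
  obtain ⟨ε, hεpos, hε⟩ : ∃ ε > 0, ball u ε ⊆ C := by
    obtain ⟨ε, hεpos, hε⟩ := Metric.isOpen_iff.1 isOpen_interior u hu
    exact ⟨ε, hεpos, hε.trans interior_subset⟩
  -- scaling of balls inside C
  have hscale : ∀ t : ℝ, 0 < t → ∀ x : EuclideanSpace ℝ (Fin n), ∀ δ : ℝ,
      ball x δ ⊆ C → ball (t • x) (t * δ) ⊆ C := by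
    intro t ht x δ hx y hy
    have hz : t⁻¹ • y ∈ ball x δ := by
      rw [mem_ball, dist_eq_norm] at hy ⊢
      have : t⁻¹ • y - x = t⁻¹ • (y - t • x) := by
        rw [smul_sub, smul_smul, inv_mul_cancel₀ ht.ne', one_smul]
      rw [this, norm_smul, norm_inv, Real.norm_eq_abs, abs_of_pos ht]
      calc t⁻¹ * ‖y - t • x‖ < t⁻¹ * (t * δ) := by
            exact mul_lt_mul_of_pos_left hy (inv_pos.2 ht)
        _ = δ := by field_simp
    have := hC_cone _ (hx hz) t ht.le
    rwa [smul_inv_smul₀ ht.ne'] at this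
  -- 0 ∉ K
  have h0K : (0 : EuclideanSpace ℝ (Fin n)) ∉ K := by
    intro h0K
    refine absurd (coconvex_aux_volume_top hn (C \ K) ?_) hAfin.ne
    -- find a point of C \ K in the interior of C
    have hfr : volume ((C \ K) \ interior C) = 0 := by
      refine measure_mono_null ?_ (hC_conv.addHaar_frontier volume)
      intro x hx
      rw [frontier, hC_closed.closure_eq]
      exact ⟨hx.1.1, hx.2⟩
    have hpos : 0 < volume ((C \ K) ∩ interior C) := by
      by_contra hzero
      push_neg at hzero
      have h0 : volume ((C \ K) ∩ interior C) = 0 := le_antisymm hzero bot_le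
      have : volume (C \ K) ≤ 0 := by
        calc volume (C \ K)
            ≤ volume (((C \ K) ∩ interior C) ∪ ((C \ K) \ interior C)) := by
              exact measure_mono (by rw [Set.inter_union_diff])
          _ ≤ volume ((C \ K) ∩ interior C) + volume ((C \ K) \ interior C) :=
              measure_union_le _ _
          _ = 0 := by rw [h0, hfr, add_zero]
      exact absurd (le_antisymm this bot_le) hApos.ne'
    obtain ⟨x₀, hx₀⟩ := nonempty_of_measure_ne_zero hpos.ne'
    have hx₀int : x₀ ∈ interior C := hx₀.2
    have hx₀K : x₀ ∉ K := hx₀.1.2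
    obtain ⟨δ, hδpos, hδ⟩ : ∃ δ > 0, ball x₀ δ ⊆ interior C ∩ Kᶜ := by
      have hopen : IsOpen (interior C ∩ Kᶜ) := isOpen_interior.inter hKclosed.isOpen_compl
      obtain ⟨δ, hδpos, hδ⟩ := Metric.isOpen_iff.1 hopen x₀ ⟨hx₀int, hx₀K⟩
      exact ⟨δ, hδpos, hδ⟩
    intro R hR
    set t := max 1 (R / δ) with ht
    have ht1 : (1:ℝ) ≤ t := le_max_left _ _
    have htpos : (0:ℝ) < t := lt_of_lt_of_le one_pos ht1
    have hRtδ : R ≤ t * δ := by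
      have : R / δ ≤ t := le_max_right _ _
      calc R = (R / δ) * δ := by field_simp
        _ ≤ t * δ := mul_le_mul_of_nonneg_right this hδpos.le
    refine ⟨t • x₀, fun y hy => ?_⟩
    have hy' : y ∈ ball (t • x₀) (t * δ) := mem_ball.2 (lt_of_lt_of_le (mem_ball.1 hy) hRtδ)
    have hz : t⁻¹ • y ∈ ball x₀ δ := by
      rw [mem_ball, dist_eq_norm] at hy' ⊢
      have : t⁻¹ • y - x₀ = t⁻¹ • (y - t • x₀) := by
        rw [smul_sub, smul_smul, inv_mul_cancel₀ htpos.ne', one_smul]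
      rw [this, norm_smul, norm_inv, Real.norm_eq_abs, abs_of_pos htpos]
      calc t⁻¹ * ‖y - t • x₀‖ < t⁻¹ * (t * δ) :=
            mul_lt_mul_of_pos_left hy' (inv_pos.2 htpos)
        _ = δ := by field_simp
    have hzC : t⁻¹ • y ∈ interior C ∩ Kᶜ := hδ hz
    constructor
    · have := hC_cone _ (interior_subset hzC.1) t htpos.le
      rwa [smul_inv_smul₀ htpos.ne'] at this
    · intro hyK
      apply hzC.2
      have hmem : t⁻¹ • y + (1 - t⁻¹) • (0 : EuclideanSpace ℝ (Fin n)) ∈ K := by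
        refine hKconv hyK h0K (inv_nonneg.2 htpos.le) ?_ (by ring)
        have : t⁻¹ ≤ 1 := by
          rw [inv_le_one_iff₀]; right; exact ht1
        linarith
      simpa using hmem
  -- the set of parameters landing in K
  set T : Set ℝ := {r : ℝ | r • u ∈ K} with hT
  have hTclosed : IsClosed T := hKclosed.preimage (continuous_id.smul continuous_const)
  have hTconv : Convex ℝ T := by
    intro r₁ h1 r₂ h2 a b ha hb hab
    show (a • r₁ + b • r₂) • u ∈ K
    rw [smul_eq_mul, smul_eq_mul, add_smul, mul_smul, mul_smul]
    exact hKconv h1 h2 ha hb hab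
  have h0T : (0:ℝ) ∉ T := by
    show ¬ (0:ℝ) • u ∈ K
    rw [zero_smul]; exact h0K
  have hTpos : ∀ r ∈ T, (0:ℝ) < r := by
    intro r hr
    rcases lt_trichotomy r 0 with h | h | h
    · exfalso
      have h1 : r • u ∈ C := hKC hr
      have h2 : r • u ∈ -C := by
        rw [Set.mem_neg, ← neg_smul]
        exact hC_cone u huC (-r) (by linarith)
      have : r • u ∈ C ∩ (-C) := ⟨h1, h2⟩
      rw [hC_pointed, Set.mem_singleton_iff, smul_eq_zero] at this
      rcases this with h' | h'
      · exact absurd h' h.ne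
      · exact hune h'
    · exact absurd (h ▸ hr) h0T
    · exact h
  -- T contains a tail [b, ∞)
  have hTtail : ∃ b : ℝ, ∀ r : ℝ, b ≤ r → r ∈ T := by
    by_contra htail
    push_neg at htail
    refine absurd (coconvex_aux_volume_top hn (C \ K) ?_) hAfin.ne
    intro R hR
    rcases Set.eq_empty_or_nonempty K with hKe | ⟨y₀, hy₀⟩
    · -- K empty: balls around t • u
      set t := max 1 (R / ε) with htdef
      have ht1 : (1:ℝ) ≤ t := le_max_left _ _
      have htpos : (0:ℝ) < t := lt_of_lt_of_le one_pos ht1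
      have hRtε : R ≤ t * ε := by
        have : R / ε ≤ t := le_max_right _ _
        calc R = (R / ε) * ε := by field_simp
          _ ≤ t * ε := mul_le_mul_of_nonneg_right this hεpos.le
      refine ⟨t • u, fun y hy => ?_⟩
      have : y ∈ ball (t • u) (t * ε) := mem_ball.2 (lt_of_lt_of_le (mem_ball.1 hy) hRtε)
      refine ⟨hscale t htpos u ε hε this, ?_⟩
      rw [hKe]; exact Set.notMem_empty y
    · -- K nonempty: separate a far point of the ray from K
      obtain ⟨r, hrb, hrK⟩ := htail (max 1 (2 * R / ε))
      have hr1 : (1:ℝ) ≤ r := le_trans (le_max_left _ _) hrb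
      have hrpos : (0:ℝ) < r := lt_of_lt_of_le one_pos hr1
      have hrK' : r • u ∉ K := hrK
      set s := r * ε / 2 with hs
      have hspos : (0:ℝ) < s := by positivity
      have hRs : R ≤ s := by
        have h2 : 2 * R / ε ≤ r := le_trans (le_max_right _ _) hrb
        have : 2 * R ≤ r * ε := by
          calc 2 * R = (2 * R / ε) * ε := by field_simp
            _ ≤ r * ε := mul_le_mul_of_nonneg_right h2 hεpos.le
        rw [hs]; linarith
      obtain ⟨f, c, hfc, hfK⟩ := geometric_hahn_banach_point_closed hKconv hKclosed hrK'
      set g := (InnerProductSpace.toDual ℝ (EuclideanSpace ℝ (Fin n))).symm f with hg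
      have hrepr : ∀ x, f x = inner ℝ g x := by
        intro x
        rw [hg]
        exact (InnerProductSpace.toDual_symm_apply).symm
      have hgne : g ≠ 0 := by
        intro h
        have : f (r • u) < f y₀ := lt_trans hfc (hfK y₀ hy₀)
        rw [hrepr, hrepr, h] at this
        simp at this
      have hgpos : (0:ℝ) < ‖g‖ := norm_pos_iff.2 hgne
      set v : EuclideanSpace ℝ (Fin n) := ‖g‖⁻¹ • g with hv
      have hvnorm : ‖v‖ = 1 := by
        rw [hv, norm_smul, norm_inv, norm_norm, inv_mul_cancel₀ hgpos.ne']
      have hgv : (inner ℝ g v : ℝ) = ‖g‖ := by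
        rw [hv, real_inner_smul_right, real_inner_self_eq_norm_sq]
        field_simp
      set z := r • u - s • v with hz
      have hball : ball z s ⊆ C \ K := by
        intro y hy
        have hyz : ‖y - z‖ < s := by rw [← dist_eq_norm]; exact mem_ball.1 hy
        constructor
        · -- y ∈ C
          have hmem : y ∈ ball (r • u) (r * ε) := by
            rw [mem_ball, dist_eq_norm]
            have : y - r • u = (y - z) - s • v := by rw [hz]; abel
            rw [this]
            calc ‖(y - z) - s • v‖ ≤ ‖y - z‖ + ‖s • v‖ := norm_sub_le _ _
              _ = ‖y - z‖ + s := by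
                  rw [norm_smul, hvnorm, Real.norm_eq_abs, abs_of_pos hspos, mul_one]
              _ < s + s := by linarith
              _ = r * ε := by rw [hs]; ring
          exact hscale r hrpos u ε hε hmem
        · -- y ∉ K
          intro hyK
          have hfy : f y = f (r • u) - s * ‖g‖ + inner ℝ g (y - z) := by
            rw [hrepr, hrepr]
            have : y = (r • u) - s • v + (y - z) := by rw [hz]; abel
            nth_rewrite 1 [this]
            rw [inner_add_right, inner_sub_right, real_inner_smul_right, real_inner_smul_right, hgv]
          have hbound : (inner ℝ g (y - z) : ℝ) ≤ ‖g‖ * ‖y - z‖ := real_inner_le_norm g _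
          have hfyK : c < f y := hfK y hyK
          have : f y ≤ f (r • u) - s * ‖g‖ + ‖g‖ * s := by
            rw [hfy]
            have : ‖g‖ * ‖y - z‖ ≤ ‖g‖ * s := mul_le_mul_of_nonneg_left hyz.le hgpos.le
            linarith [hbound]
          have : f y ≤ f (r • u) := by linarith
          linarith [hfc]
      exact ⟨z, fun y hy => hball (mem_ball.2 (lt_of_lt_of_le (mem_ball.1 hy) hRs))⟩
  -- conclude: T = Ici ρ with ρ = sInf T
  obtain ⟨b, hb⟩ := hTtail
  have hTne : T.Nonempty := ⟨max b 0, hb _ (le_max_left _ _)⟩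
  have hTbdd : BddBelow T := ⟨0, fun r hr => (hTpos r hr).le⟩
  set ρ := sInf T with hρ
  have hρT : ρ ∈ T := hTclosed.csInf_mem hTne hTbdd
  have hρpos : 0 < ρ := hTpos ρ hρT
  have hTIci : T = Set.Ici ρ := by
    ext r
    constructor
    · intro hr; exact csInf_le hTbdd hr
    · intro hr
      have htT : max r b ∈ T := hb _ (le_max_right _ _)
      exact hTconv.ordConnected.out hρT htT ⟨hr, le_max_left _ _⟩
  refine ⟨ρ, hρpos, Or.inl ?_⟩
  ext r
  simp only [Set.mem_setOf_eq, Set.mem_Ico, Set.mem_diff]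
  constructor
  · rintro ⟨hr0, -, hrK⟩
    refine ⟨hr0, ?_⟩
    by_contra h
    push_neg at h
    exact hrK (show r ∈ T from hTIci.symm ▸ Set.mem_Ici.2 h)
  · rintro ⟨hr0, hrρ⟩
    refine ⟨hr0, hray r hr0, fun h => ?_⟩
    have hmem : r ∈ T := h
    have : r ∈ Set.Ici ρ := hTIci ▸ hmem
    exact absurd (Set.mem_Ici.1 this) (not_le.2 hrρ)
end

section
/- Let $C \subset \mathbb{R}^n$ be a pointed closed convex cone with nonempty interior, $\omega \subset \Omega_C$ a nonempty compact set, and $f : \omega \to (0, \infty)$ continuous. Then the Wulff shape $K = C \cap \bigcap_{u \in \omega} \{x : \langle x, u \rangle \le -f(u)\}$ is a closed convex subset of $C$ with $C \setminus K$ bounded and nonempty (i.e., $K$ is $C$-full). -/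
open Set Pointwise MeasureTheory RealInnerProductSpace

/-- The Wulff shape `K = C ∩ ⋂_{u ∈ ω} {x : ⟪x,u⟫ ≤ -f(u)}` associated with a
nonempty compact `ω ⊂ Ω_C` and a positive continuous `f` is a closed convex
subset of `C` whose complement in `C` is bounded and nonempty (`K` is `C`-full). -/
theorem wulff_shape_is_cfull {n : ℕ}
    (C : Set (EuclideanSpace ℝ (Fin n)))
    (hC_closed : IsClosed C) (hC_conv : Convex ℝ C)
    (hC_cone : ∀ x ∈ C, ∀ r : ℝ, 0 ≤ r → r • x ∈ C)
    (hC_pointed : C ∩ (-C) = {0})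
    (hC_int : (interior C).Nonempty)
    (ω : Set (EuclideanSpace ℝ (Fin n)))
    (hω : ω ⊆ Metric.sphere (0 : EuclideanSpace ℝ (Fin n)) 1 ∩
        interior {x : EuclideanSpace ℝ (Fin n) | ∀ y ∈ C, ⟪x, y⟫ ≤ 0})
    (hωcompact : IsCompact ω) (hωne : ω.Nonempty)
    (f : EuclideanSpace ℝ (Fin n) → ℝ) (hfpos : ∀ u ∈ ω, 0 < f u)
    (hfcont : ContinuousOn f ω) :
    IsClosed (C ∩ ⋂ u ∈ ω, {x : EuclideanSpace ℝ (Fin n) | ⟪x, u⟫ ≤ -f u}) ∧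
    Convex ℝ (C ∩ ⋂ u ∈ ω, {x : EuclideanSpace ℝ (Fin n) | ⟪x, u⟫ ≤ -f u}) ∧
    (C ∩ ⋂ u ∈ ω, {x : EuclideanSpace ℝ (Fin n) | ⟪x, u⟫ ≤ -f u}) ⊆ C ∧
    Bornology.IsBounded
      (C \ (C ∩ ⋂ u ∈ ω, {x : EuclideanSpace ℝ (Fin n) | ⟪x, u⟫ ≤ -f u})) ∧
    (C \ (C ∩ ⋂ u ∈ ω, {x : EuclideanSpace ℝ (Fin n) | ⟪x, u⟫ ≤ -f u})).Nonempty := by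
  set P : Set (EuclideanSpace ℝ (Fin n)) :=
    {x : EuclideanSpace ℝ (Fin n) | ∀ y ∈ C, ⟪x, y⟫ ≤ 0} with hP
  -- uniform thickening of ω inside interior P
  have hωint : ω ⊆ interior P := fun u hu => (hω hu).2
  obtain ⟨ε, hεpos, hthick⟩ := hωcompact.exists_thickening_subset_open isOpen_interior hωint
  -- key inequality
  have key : ∀ u ∈ ω, ∀ x ∈ C, ⟪x, u⟫ ≤ -(ε/2) * ‖x‖ := by
    intro u hu x hx
    rcases eq_or_ne x 0 with rfl | hx0
    · simp
    · have hxn : (0:ℝ) < ‖x‖ := norm_pos_iff.2 hx0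
      set v := u + (ε/2 * ‖x‖⁻¹) • x with hv
      have hvP : v ∈ P := by
        have : v ∈ Metric.ball u ε := by
          have : dist v u = ε/2 := by
            rw [dist_eq_norm, hv, add_sub_cancel_left, norm_smul]
            rw [Real.norm_eq_abs, abs_of_pos (by positivity)]
            field_simp
          rw [Metric.mem_ball, this]; linarith
        exact interior_subset (hthick ((Metric.ball_subset_thickening hu ε) this))
      have := hvP x hx
      rw [hv, inner_add_left, real_inner_smul_left, real_inner_self_eq_norm_sq] at this
      have h2 : ε/2 * ‖x‖⁻¹ * ‖x‖^2 = ε/2 * ‖x‖ := by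
        field_simp
      rw [h2] at this
      rw [real_inner_comm]
      linarith
  -- closedness
  have hclosed : IsClosed (C ∩ ⋂ u ∈ ω, {x : EuclideanSpace ℝ (Fin n) | ⟪x, u⟫ ≤ -f u}) := by
    refine hC_closed.inter (isClosed_biInter fun u hu => ?_)
    exact isClosed_le (Continuous.inner continuous_id continuous_const) continuous_const
  have hconv : Convex ℝ (C ∩ ⋂ u ∈ ω, {x : EuclideanSpace ℝ (Fin n) | ⟪x, u⟫ ≤ -f u}) := by
    refine hC_conv.inter (convex_iInter fun u => convex_iInter fun hu => ?_)
    exact convex_halfSpace_le ⟨fun a b => inner_add_left a b u,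
      fun c a => real_inner_smul_left a u c⟩ (-f u)
  refine ⟨hclosed, hconv, inter_subset_left, ?_, ?_⟩
  · -- boundedness
    obtain ⟨u₀, hu₀, hmax⟩ := hωcompact.exists_isMaxOn hωne hfcont
    rw [Metric.isBounded_iff_subset_closedBall 0]
    refine ⟨f u₀ / (ε/2), fun x hx => ?_⟩
    obtain ⟨hxC, hxK⟩ := hx
    have : ∃ u ∈ ω, ¬ ⟪x, u⟫ ≤ -f u := by
      by_contra h
      push_neg at h
      exact hxK ⟨hxC, mem_iInter₂.2 fun u hu => h u hu⟩
    obtain ⟨u, hu, hgt⟩ := this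
    push_neg at hgt
    have h1 := key u hu x hxC
    have h2 : f u ≤ f u₀ := hmax hu
    have : (ε/2) * ‖x‖ < f u₀ := by nlinarith
    rw [Metric.mem_closedBall, dist_zero_right, le_div_iff₀ (by positivity)]
    nlinarith
  · -- nonemptiness: 0 ∈ C \ K
    obtain ⟨x₀, hx₀⟩ := hC_int
    have h0C : (0 : EuclideanSpace ℝ (Fin n)) ∈ C := by
      have := hC_cone x₀ (interior_subset hx₀) 0 le_rfl
      simpa using this
    obtain ⟨u, hu⟩ := hωne
    refine ⟨0, h0C, fun h => ?_⟩
    have := mem_iInter₂.1 h.2 u hu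
    simp only [mem_setOf_eq, inner_zero_left] at this
    linarith [hfpos u hu]
end

section
/- Let $C \subset \mathbb{R}^n$ be a pointed closed convex cone with nonempty interior, $\omega \subset \Omega_C$ a nonempty compact set, and $K \in \mathcal{K}(C, \omega)$, i.e., $K = C \cap \bigcap_{u \in \omega} H^-(K, u)$ where $H^-(K,u)$ is the supporting halfspace with outer normal $u$. Then every point of $C \setminus K$ has norm at most $\frac{1}{a_0} \max\{-h(K,u) : u \in \omega\}$, where $a_0 > 0$ satisfies $\langle x, u\rangle \le -a_0\|x\|$ for all $x \in C$, $u \in \omega$. In particular $C \setminus K$ is bounded. -/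
open Set Pointwise MeasureTheory RealInnerProductSpace

/-- If `K` is `C`-determined by a nonempty compact `ω ⊂ Ω_C`, i.e.
`K = C ∩ ⋂_{u ∈ ω} H⁻(K,u)`, and `a₀ > 0` satisfies `⟪x,u⟫ ≤ -a₀‖x‖` on `C × ω`,
then every `x ∈ C \ K` satisfies `‖x‖ ≤ (1/a₀) * sup {-h(K,u) : u ∈ ω}`;
in particular `C \ K` is bounded. -/
theorem cdetermined_complement_bounded {n : ℕ}
    (C K : Set (EuclideanSpace ℝ (Fin n)))
    (hC_closed : IsClosed C) (hC_conv : Convex ℝ C)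
    (hC_cone : ∀ x ∈ C, ∀ r : ℝ, 0 ≤ r → r • x ∈ C)
    (hC_pointed : C ∩ (-C) = {0})
    (hC_int : (interior C).Nonempty)
    (ω : Set (EuclideanSpace ℝ (Fin n)))
    (hω : ω ⊆ Metric.sphere (0 : EuclideanSpace ℝ (Fin n)) 1 ∩
        interior {x : EuclideanSpace ℝ (Fin n) | ∀ y ∈ C, ⟪x, y⟫ ≤ 0})
    (hωcompact : IsCompact ω) (hωne : ω.Nonempty)
    (hKne : K.Nonempty)
    (hK : K = C ∩ ⋂ u ∈ ω,
      {x : EuclideanSpace ℝ (Fin n) | ⟪x, u⟫ ≤ sSup ((fun y => ⟪y, u⟫) '' K)})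
    (a₀ : ℝ) (ha₀ : 0 < a₀)
    (ha₀sep : ∀ x ∈ C, ∀ u ∈ ω, ⟪x, u⟫ ≤ -a₀ * ‖x‖) :
    (∀ x ∈ C \ K, ‖x‖ ≤ (1 / a₀) * sSup ((fun u => -sSup ((fun y => ⟪y, u⟫) '' K)) '' ω)) ∧
    Bornology.IsBounded (C \ K) := by
  obtain ⟨y₀, hy₀⟩ := hKne
  have hy₀C : y₀ ∈ C := by rw [hK] at hy₀; exact hy₀.1
  have hKC : K ⊆ C := by rw [hK]; exact Set.inter_subset_left
  -- for each u ∈ ω, the inner products over K are bounded above by 0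
  have hbdd : ∀ u ∈ ω, BddAbove ((fun y => ⟪y, u⟫) '' K) := by
    intro u hu
    refine ⟨0, ?_⟩
    rintro _ ⟨y, hy, rfl⟩
    have := ha₀sep y (hKC hy) u hu
    nlinarith [norm_nonneg y]
  -- the outer image is bounded above by ‖y₀‖
  have houter : ∀ u ∈ ω, -sSup ((fun y => ⟪y, u⟫) '' K) ≤ ‖y₀‖ := by
    intro u hu
    have h1 : ⟪y₀, u⟫ ≤ sSup ((fun y => ⟪y, u⟫) '' K) :=
      le_csSup (hbdd u hu) ⟨y₀, hy₀, rfl⟩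
    have hu1 : ‖u‖ = 1 := by
      have := (hω hu).1
      simpa using this
    have h2 : -‖y₀‖ ≤ ⟪y₀, u⟫ := by
      have := abs_real_inner_le_norm y₀ u
      rw [hu1, mul_one] at this
      linarith [abs_le.mp this]
    linarith
  have houterBdd : BddAbove ((fun u => -sSup ((fun y => ⟪y, u⟫) '' K)) '' ω) := by
    refine ⟨‖y₀‖, ?_⟩
    rintro _ ⟨u, hu, rfl⟩
    exact houter u hu
  set M := sSup ((fun u => -sSup ((fun y => ⟪y, u⟫) '' K)) '' ω) with hM
  have hmain : ∀ x ∈ C \ K, ‖x‖ ≤ (1 / a₀) * M := by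
    rintro x ⟨hxC, hxK⟩
    have : ∃ u ∈ ω, sSup ((fun y => ⟪y, u⟫) '' K) < ⟪x, u⟫ := by
      by_contra h
      push_neg at h
      apply hxK
      rw [hK]
      refine ⟨hxC, ?_⟩
      simp only [Set.mem_iInter, Set.mem_setOf_eq]
      exact h
    obtain ⟨u, hu, hlt⟩ := this
    have h1 : ⟪x, u⟫ ≤ -a₀ * ‖x‖ := ha₀sep x hxC u hu
    have h2 : -sSup ((fun y => ⟪y, u⟫) '' K) ≤ M :=
      le_csSup houterBdd ⟨u, hu, rfl⟩
    have h3 : a₀ * ‖x‖ ≤ M := by linarith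
    rw [div_mul_eq_mul_div, one_mul, le_div_iff₀ ha₀]
    linarith [mul_comm a₀ ‖x‖]
  refine ⟨hmain, ?_⟩
  have : C \ K ⊆ Metric.closedBall 0 ((1 / a₀) * M) := by
    intro x hx
    simpa [Metric.mem_closedBall] using hmain x hx
  exact (Metric.isBounded_closedBall).subset this
end

section
/- Let $C \subset \mathbb{R}^n$ be a pointed closed convex cone with nonempty interior, $\omega \subset \Omega_C$ a nonempty compact set, and $f: \omega \to (0,\infty)$ continuous with Wulff shape $K$. Then the surface area measure of $K$ vanishes outside $\omega$: $S_{n-1}(K, \Omega_C \setminus \omega) = 0$, and moreover $S_{n-1}(K, \{v \in \omega : -h(K,v) \ne f(v)\}) = 0$. -/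
set_option maxHeartbeats 4000000

open Set Pointwise MeasureTheory RealInnerProductSpace
open Metric Module Filter Topology
open scoped ENNReal NNReal

/-- `u` is an outer unit normal vector of `K` at the boundary point `x`. -/
def IsOuterNormal {n : ℕ} (K : Set (EuclideanSpace ℝ (Fin n)))
    (x u : EuclideanSpace ℝ (Fin n)) : Prop :=
  ‖u‖ = 1 ∧ ∀ y ∈ K, ⟪y, u⟫ ≤ ⟪x, u⟫

/-- The reverse spherical image of `K` at `ω`. -/
def revSphImage {n : ℕ} (K ω : Set (EuclideanSpace ℝ (Fin n))) :
    Set (EuclideanSpace ℝ (Fin n)) :=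
  {x ∈ frontier K | ∃ u ∈ ω, IsOuterNormal K x u}


lemma deriv_zero_of_nonpos_on_density {m : ℕ} {A : Set (EuclideanSpace ℝ (Fin m))}
    {a : EuclideanSpace ℝ (Fin m)} {F : EuclideanSpace ℝ (Fin m) → ℝ}
    {M : EuclideanSpace ℝ (Fin m) →L[ℝ] ℝ}
    (hF : HasFDerivAt F M a) (hFa : F a = 0) (hFA : ∀ b ∈ A, F b ≤ 0)
    (hdens : Tendsto (fun r => volume (A ∩ closedBall a r) / volume (closedBall a r))
      (𝓝[>] (0:ℝ)) (𝓝 1)) :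
    M = 0 := by
  -- it suffices to show `M v ≤ 0` for all unit vectors `v`
  have key : ∀ v : EuclideanSpace ℝ (Fin m), ‖v‖ = 1 → M v ≤ 0 := by
    intro v hv
    by_contra hMv
    push_neg at hMv
    set c₀ : ℝ := M v with hc₀
    have hc₀pos : 0 < c₀ := hMv
    -- choose ρ
    set ρ : ℝ := min (c₀ / (8 * (‖M‖ + 1))) (1/8) with hρdef
    have hρpos : 0 < ρ := by
      apply lt_min
      · positivity
      · norm_num
    have hρ8 : ρ ≤ 1/8 := min_le_right _ _
    have hMρ : ‖M‖ * ρ ≤ c₀ / 8 := by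
      have h1 : ρ ≤ c₀ / (8 * (‖M‖ + 1)) := min_le_left _ _
      have h2 : ‖M‖ * ρ ≤ (‖M‖ + 1) * (c₀ / (8 * (‖M‖ + 1))) := by
        apply mul_le_mul (by linarith [norm_nonneg M]) h1 hρpos.le (by positivity)
      calc ‖M‖ * ρ ≤ (‖M‖ + 1) * (c₀ / (8 * (‖M‖ + 1))) := h2
        _ = c₀ / 8 := by field_simp
    -- little-o control
    have hlo := hF.isLittleO
    rw [Asymptotics.isLittleO_iff] at hlo
    have hev := hlo (show (0:ℝ) < c₀/8 by positivity)
    rw [Metric.eventually_nhds_iff] at hev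
    obtain ⟨r₁, hr₁pos, hr₁⟩ := hev
    -- find a good point b ∈ A in the small ball
    have hex : ∃ r : ℝ, 0 < r ∧ r ≤ r₁/2 ∧
        (A ∩ closedBall (a + (r/2) • v) (ρ * r)).Nonempty := by
      by_contra hcon
      push_neg at hcon
      -- then the density ratio is bounded away from 1
      set k : ℝ≥0∞ := ENNReal.ofReal (ρ ^ finrank ℝ (EuclideanSpace ℝ (Fin m))) with hk
      have hkpos : 0 < k := by
        rw [hk]; exact ENNReal.ofReal_pos.2 (by positivity)
      have hk1 : k ≤ 1 := by
        rw [hk]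
        refine ENNReal.ofReal_le_one.2 ?_
        exact pow_le_one₀ hρpos.le (by linarith)
      have hub : ∀ r : ℝ, 0 < r → r ≤ r₁/2 →
          volume (A ∩ closedBall a r) / volume (closedBall a r) ≤ 1 - k := by
        intro r hr hrr₁
        have hsub : closedBall (a + (r/2) • v) (ρ * r) ⊆ closedBall a r := by
          intro b hb
          rw [mem_closedBall] at hb ⊢
          have : dist b a ≤ dist b (a + (r/2) • v) + dist (a + (r/2) • v) a := dist_triangle _ _ _
          have h2 : dist (a + (r/2) • v) a = r/2 := by
            have he : (a + (r/2) • v) - a = (r/2) • v := by abel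
            rw [dist_eq_norm, he, norm_smul, hv, mul_one, Real.norm_eq_abs,
              abs_of_nonneg (by linarith : (0:ℝ) ≤ r/2)]
          nlinarith
        have hAsub : A ∩ closedBall a r ⊆ closedBall a r \ closedBall (a + (r/2) • v) (ρ * r) := by
          intro b hb
          refine ⟨hb.2, fun hmem => ?_⟩
          exact Set.eq_empty_iff_forall_notMem.mp (hcon r hr hrr₁) b ⟨hb.1, hmem⟩
        set μB := volume (closedBall a r) with hμB
        have hBfin : μB ≠ ⊤ := measure_closedBall_lt_top.ne
        have hBpos : μB ≠ 0 := (measure_closedBall_pos volume a hr).ne'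
        have hsm : volume (closedBall (a + (r/2) • v) (ρ * r)) = k * μB := by
          rw [Measure.addHaar_closedBall volume _ (by positivity : (0:ℝ) ≤ ρ * r),
            hμB, Measure.addHaar_closedBall volume _ hr.le, mul_pow, ENNReal.ofReal_mul (by positivity), hk,
            mul_assoc]
        have hdiff : volume (closedBall a r \ closedBall (a + (r/2) • v) (ρ * r))
            = μB - k * μB := by
          rw [measure_diff hsub measurableSet_closedBall.nullMeasurableSet, hsm]
          rw [hsm]
          exact (ENNReal.mul_lt_top (lt_of_le_of_lt hk1 ENNReal.one_lt_top) hBfin.lt_top).ne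
        have hle : volume (A ∩ closedBall a r) ≤ μB - k * μB :=
          le_trans (measure_mono hAsub) hdiff.le
        have heq : μB - k * μB = (1 - k) * μB := by
          rw [ENNReal.sub_mul (fun _ _ => hBfin), one_mul]
        calc volume (A ∩ closedBall a r) / μB ≤ ((1 - k) * μB) / μB :=
              ENNReal.div_le_div_right (heq ▸ hle) _
          _ = (1 - k) := by
              rw [mul_div_assoc, ENNReal.div_self hBpos hBfin, mul_one]
      -- contradiction with the density hypothesis
      have h1k : (1:ℝ≥0∞) - k < 1 := ENNReal.sub_lt_self ENNReal.one_ne_top one_ne_zero hkpos.ne'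
      have hIoi : Ioi ((1:ℝ≥0∞) - k) ∈ 𝓝 (1:ℝ≥0∞) := Ioi_mem_nhds h1k
      have hev2 : ∀ᶠ r in 𝓝[>] (0:ℝ),
          volume (A ∩ closedBall a r) / volume (closedBall a r) ∈ Ioi ((1:ℝ≥0∞) - k) :=
        hdens.eventually hIoi
      have hmem : Ioc (0:ℝ) (r₁/2) ∈ 𝓝[>] (0:ℝ) := Ioc_mem_nhdsGT_of_mem ⟨le_refl _, by positivity⟩
      have hmem' : ∀ᶠ r in 𝓝[>] (0:ℝ), r ∈ Ioc (0:ℝ) (r₁/2) := eventually_of_mem hmem fun x hx => hx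
      obtain ⟨r, hr1, hr2⟩ := (hev2.and hmem').exists
      exact absurd (hub r hr2.1 hr2.2) (not_le.2 hr1)
    obtain ⟨r, hrpos, hrr₁, b, hbA, hb⟩ := hex
    -- derive the contradiction
    rw [mem_closedBall, dist_eq_norm] at hb
    have hba : ‖b - a‖ ≤ r := by
      have : b - a = (b - (a + (r/2) • v)) + (r/2) • v := by abel
      rw [this]
      calc ‖(b - (a + (r/2) • v)) + (r/2) • v‖ ≤ ‖b - (a + (r/2) • v)‖ + ‖(r/2) • v‖ := norm_add_le _ _
        _ ≤ ρ * r + r/2 := by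
            refine add_le_add hb ?_
            rw [norm_smul, hv, mul_one]
            rw [Real.norm_eq_abs, abs_of_nonneg (by linarith)]
        _ ≤ r := by nlinarith
    have hblt : b ∈ ball a r₁ := by
      rw [mem_ball, dist_eq_norm]
      calc ‖b - a‖ ≤ r := hba
        _ < r₁ := by linarith
    have hlo2 := hr₁ (show dist b a < r₁ by rwa [dist_eq_norm])
    -- ‖F b - F a - M (b - a)‖ ≤ c₀/8 * ‖b - a‖
    have hM1 : M (b - a) ≥ (r/2) * c₀ - ‖M‖ * (ρ * r) := by
      have : b - a = (b - (a + (r/2) • v)) + (r/2) • v := by abel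
      rw [this, map_add, M.map_smul]
      have habs : |M (b - (a + (r/2) • v))| ≤ ‖M‖ * (ρ * r) := by
        calc |M (b - (a + (r/2) • v))| = ‖M (b - (a + (r/2) • v))‖ := (Real.norm_eq_abs _).symm
          _ ≤ ‖M‖ * ‖b - (a + (r/2) • v)‖ := M.le_opNorm _
          _ ≤ ‖M‖ * (ρ * r) := by
              exact mul_le_mul_of_nonneg_left hb (norm_nonneg _)
      have := neg_abs_le (M (b - (a + (r/2) • v)))
      simp only [smul_eq_mul]
      nlinarith
    have hFb : F b ≤ 0 := hFA b hbA
    have hlow : F b - F a - M (b - a) ≥ -(c₀/8 * r) := by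
      have h1 : ‖F b - F a - M (b - a)‖ ≤ c₀/8 * ‖b - a‖ := hlo2
      rw [Real.norm_eq_abs] at h1
      have h2 : c₀/8 * ‖b - a‖ ≤ c₀/8 * r := by
        apply mul_le_mul_of_nonneg_left hba (by positivity)
      have := neg_abs_le (F b - F a - M (b - a))
      linarith
    -- combine
    nlinarith
  refine ContinuousLinearMap.ext fun v => ?_
  simp only [ContinuousLinearMap.zero_apply]
  rcases eq_or_ne v 0 with rfl | hv
  · simp
  · have hnorm : ‖(‖v‖⁻¹ • v)‖ = 1 := by
      rw [norm_smul, norm_inv, norm_norm]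
      exact inv_mul_cancel₀ (norm_ne_zero_iff.2 hv)
    have h1 := key (‖v‖⁻¹ • v) hnorm
    have h2 := key (-(‖v‖⁻¹ • v)) (by rw [norm_neg]; exact hnorm)
    rw [map_neg] at h2
    rw [ContinuousLinearMap.map_smul, smul_eq_mul] at h1 h2
    have hvpos : 0 < ‖v‖ := norm_pos_iff.2 hv
    have := inv_pos.2 hvpos
    nlinarith

lemma singular_near_e_null {n : ℕ} (hn : 1 ≤ n) {K : Set (EuclideanSpace ℝ (Fin n))}
    (hKint : (interior K).Nonempty)
    {e : EuclideanSpace ℝ (Fin n)} (he : ‖e‖ = 1) :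
    μH[((n:ℝ)-1)] {x | x ∈ K ∧ (∃ u, IsOuterNormal K x u ∧ (3:ℝ)/4 ≤ ⟪u, e⟫) ∧
      ∃ u v, IsOuterNormal K x u ∧ IsOuterNormal K x v ∧ u ≠ v} = 0 := by
  classical
  have hene : e ≠ 0 := fun h => by simp [h] at he
  set W : Submodule ℝ (EuclideanSpace ℝ (Fin n)) := (ℝ ∙ e)ᗮ with hW
  set m := finrank ℝ W with hmdef
  -- dimension count
  have hdim : 1 + m = n := by
    have h1 := Submodule.finrank_add_finrank_orthogonal (𝕜 := ℝ) (ℝ ∙ e)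
    rw [finrank_span_singleton hene, finrank_euclideanSpace_fin] at h1
    rw [hmdef, hW]
    exact h1
  have hcast : ((n:ℝ) - 1) = (m:ℝ) := by
    have : (n:ℝ) = 1 + (m:ℝ) := by exact_mod_cast hdim.symm
    linarith
  set ψ := (stdOrthonormalBasis ℝ W).repr with hψ
  set Q := W.orthogonalProjectionOnto with hQ
  -- decomposition
  have hdec : ∀ x : EuclideanSpace ℝ (Fin n), ((Q x : W) : EuclideanSpace ℝ (Fin n))
      = x - ⟪x, e⟫ • e := by
    intro x
    apply Submodule.eq_starProjection_of_mem_of_inner_eq_zero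
    · rw [hW, Submodule.mem_orthogonal]
      intro u hu
      rw [Submodule.mem_span_singleton] at hu
      obtain ⟨c, rfl⟩ := hu
      rw [real_inner_smul_left, inner_sub_right, real_inner_smul_right]
      have : ⟪e, e⟫ = 1 := by
        rw [real_inner_self_eq_norm_sq, he]; norm_num
      rw [this, real_inner_comm e x]
      ring
    · intro w hw
      have hxe : x - (x - ⟪x, e⟫ • e) = ⟪x, e⟫ • e := by abel
      rw [hxe, real_inner_smul_left]
      have : ⟪e, w⟫ = 0 := by
        rw [hW, Submodule.mem_orthogonal] at hw
        exact hw e (Submodule.mem_span_singleton_self e)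
      rw [this, mul_zero]
  set T : Set (EuclideanSpace ℝ (Fin n)) :=
    {x | x ∈ K ∧ ∃ u, IsOuterNormal K x u ∧ (3:ℝ)/4 ≤ ⟪u, e⟫} with hT
  set p : EuclideanSpace ℝ (Fin n) → EuclideanSpace ℝ (Fin m) := fun x => ψ (Q x) with hp
  -- Lipschitz bound for the inverse of p on T
  have hTlip : ∀ x ∈ T, ∀ y ∈ T, ‖x - y‖ ≤ 3 * ‖p x - p y‖ := by
    rintro x ⟨hxK, u, hu, hue⟩ y ⟨hyK, u', hu', hu'e⟩
    set t : ℝ := ⟪x - y, e⟫ with ht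
    set h : EuclideanSpace ℝ (Fin n) := x - y - t • e with hhdef
    have hh : ‖p x - p y‖ = ‖h‖ := by
      have h1 : p x - p y = ψ (Q x - Q y) := by rw [map_sub]
      have h2 : ((Q x - Q y : W) : EuclideanSpace ℝ (Fin n)) = h := by
        push_cast [hdec x, hdec y]
        rw [hhdef, ht, inner_sub_left, sub_smul]
        abel
      rw [h1, ψ.norm_map, ← Submodule.norm_coe (Q x - Q y), h2]
    have hxyh : x - y = h + t • e := by rw [hhdef]; abel
    have hyx : ⟪y - x, u⟫ ≤ 0 := by
      rw [inner_sub_left]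
      linarith [hu.2 y hyK]
    have hxy' : ⟪x - y, u'⟫ ≤ 0 := by
      rw [inner_sub_left]
      linarith [hu'.2 x hxK]
    have hexp : ∀ w : EuclideanSpace ℝ (Fin n), ⟪x - y, w⟫ = ⟪h, w⟫ + t * ⟪e, w⟫ := by
      intro w
      rw [hxyh, inner_add_left, real_inner_smul_left]
    have hhu : |⟪h, u⟫| ≤ ‖h‖ := by
      have := abs_real_inner_le_norm h u
      rw [hu.1, mul_one] at this; exact this
    have hhu' : |⟪h, u'⟫| ≤ ‖h‖ := by
      have := abs_real_inner_le_norm h u'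
      rw [hu'.1, mul_one] at this; exact this
    have htb : |t| ≤ (4/3) * ‖h‖ := by
      have e1 : ⟪h, u'⟫ + t * ⟪e, u'⟫ ≤ 0 := by rw [← hexp]; exact hxy'
      have e2 : -⟪h, u⟫ - t * ⟪e, u⟫ ≤ 0 := by
        have : ⟪y - x, u⟫ = -(⟪h, u⟫ + t * ⟪e, u⟫) := by
          rw [← hexp u, ← inner_neg_left]
          congr 1
          abel
        rw [this] at hyx
        linarith
      have hue2 : (3:ℝ)/4 ≤ ⟪e, u⟫ := by rwa [real_inner_comm]
      have hu'e2 : (3:ℝ)/4 ≤ ⟪e, u'⟫ := by rwa [real_inner_comm]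
      have hee : |⟪e, u⟫| ≤ 1 := by
        have := abs_real_inner_le_norm e u
        rw [hu.1, he, one_mul] at this; exact this
      have hee' : |⟪e, u'⟫| ≤ 1 := by
        have := abs_real_inner_le_norm e u'
        rw [hu'.1, he, one_mul] at this; exact this
      rcases le_or_gt 0 t with hta | hta
      · have hA : t * (3/4) ≤ t * ⟪e, u'⟫ := mul_le_mul_of_nonneg_left hu'e2 hta
        have hB : -⟪h, u'⟫ ≤ ‖h‖ := le_trans (neg_le_abs _) hhu'
        rw [abs_of_nonneg hta]; linarith
      · have hA : (-t) * (3/4) ≤ (-t) * ⟪e, u⟫ := mul_le_mul_of_nonneg_left hue2 (by linarith)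
        have hB : ⟪h, u⟫ ≤ ‖h‖ := le_trans (le_abs_self _) hhu
        rw [abs_of_neg hta]; nlinarith
    calc ‖x - y‖ = ‖h + t • e‖ := by rw [hxyh]
      _ ≤ ‖h‖ + ‖t • e‖ := norm_add_le _ _
      _ = ‖h‖ + |t| := by rw [norm_smul, he, mul_one, Real.norm_eq_abs]
      _ ≤ ‖h‖ + (4/3) * ‖h‖ := by linarith
      _ ≤ 3 * ‖h‖ := by nlinarith [norm_nonneg h]
      _ = 3 * ‖p x - p y‖ := by rw [hh]
  have hinj : InjOn p T := by
    intro x hx y hy hxy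
    have := hTlip x hx y hy
    rw [hxy, sub_self, norm_zero, mul_zero] at this
    have h0 : x - y = 0 := norm_le_zero_iff.1 this
    exact sub_eq_zero.1 h0
  set Γ := Function.invFunOn p T with hΓdef
  have hΓ : ∀ x ∈ T, Γ (p x) = x := by
    intro x hx
    have h1 : Γ (p x) ∈ T := Function.invFunOn_mem ⟨x, hx, rfl⟩
    have h2 : p (Γ (p x)) = p x := Function.invFunOn_eq ⟨x, hx, rfl⟩
    exact hinj h1 hx h2
  set A := p '' T with hA
  have hΓA : ∀ a ∈ A, Γ a ∈ T ∧ p (Γ a) = a := by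
    rintro a ⟨x, hx, rfl⟩
    exact ⟨Function.invFunOn_mem ⟨x, hx, rfl⟩, Function.invFunOn_eq ⟨x, hx, rfl⟩⟩
  set g : EuclideanSpace ℝ (Fin m) → ℝ := fun a => ⟪Γ a, e⟫ with hg
  have hglip : LipschitzOnWith 3 g A := by
    rw [lipschitzOnWith_iff_dist_le_mul]
    intro a ha b hb
    have hco : ((3:ℝ≥0):ℝ) = 3 := by norm_num
    rw [Real.dist_eq, dist_eq_norm, hco]
    have h1 : g a - g b = ⟪Γ a - Γ b, e⟫ := by rw [hg]; simp [inner_sub_left]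
    have h2 : |⟪Γ a - Γ b, e⟫| ≤ ‖Γ a - Γ b‖ := by
      have := abs_real_inner_le_norm (Γ a - Γ b) e
      rwa [he, mul_one] at this
    have h3 : ‖Γ a - Γ b‖ ≤ 3 * ‖p (Γ a) - p (Γ b)‖ :=
      hTlip _ (hΓA a ha).1 _ (hΓA b hb).1
    rw [(hΓA a ha).2, (hΓA b hb).2] at h3
    rw [h1]
    calc |⟪Γ a - Γ b, e⟫| ≤ ‖Γ a - Γ b‖ := h2
      _ ≤ 3 * ‖a - b‖ := h3
  obtain ⟨G, hGlip, hGeq⟩ := hglip.extend_real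
  have hrecon : ∀ a ∈ A, Γ a = ((ψ.symm a : W) : EuclideanSpace ℝ (Fin n)) + G a • e := by
    intro a ha
    obtain ⟨hΓT, hΓp⟩ := hΓA a ha
    have h1 : (Q (Γ a) : W) = ψ.symm a := by
      have hh := congrArg ψ.symm hΓp
      rwa [show p (Γ a) = ψ (Q (Γ a)) from rfl, ψ.symm_apply_apply] at hh
    have h2 := hdec (Γ a)
    rw [h1] at h2
    have h3 : G a = ⟪Γ a, e⟫ := (hGeq ha).symm
    rw [h3]
    rw [h2]
    abel
  -- bad sets
  set N₁ : Set (EuclideanSpace ℝ (Fin m)) := {a | ¬ DifferentiableAt ℝ G a} with hN₁def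
  have hN₁ : volume N₁ = 0 := by
    have := hGlip.ae_differentiableAt (μ := volume)
    rwa [ae_iff] at this
  set N₂ : Set (EuclideanSpace ℝ (Fin m)) := {a | ¬ Tendsto
      (fun r => volume (A ∩ closedBall a r) / volume (closedBall a r)) (𝓝[>] (0:ℝ)) (𝓝 1)}
    with hN₂def
  have hN₂ : volume (N₂ ∩ A) = 0 := by
    have hb := Besicovitch.ae_tendsto_measure_inter_div volume A
    rw [ae_iff] at hb
    exact le_antisymm (le_trans (Measure.le_restrict_apply A N₂) hb.le) zero_le
  -- the singular part of T is sent into the bad sets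
  set Sing : Set (EuclideanSpace ℝ (Fin n)) :=
    {x | ∃ u v, IsOuterNormal K x u ∧ IsOuterNormal K x v ∧ u ≠ v} with hSing
  have hcover : p '' (T ∩ Sing) ⊆ N₁ ∪ (N₂ ∩ A) := by
    rintro a ⟨x, ⟨hxT, hxSing⟩, rfl⟩
    have haA : p x ∈ A := ⟨x, hxT, rfl⟩
    by_contra hcon
    rw [mem_union] at hcon
    push_neg at hcon
    have hdiff : DifferentiableAt ℝ G (p x) := by
      have := hcon.1; rw [hN₁def] at this; simpa using this
    have hdens : Tendsto (fun r => volume (A ∩ closedBall (p x) r) / volume (closedBall (p x) r))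
        (𝓝[>] (0:ℝ)) (𝓝 1) := by
      have h := hcon.2
      have : p x ∉ N₂ := fun hmem => h ⟨hmem, haA⟩
      rw [hN₂def] at this; simpa using this
    set a := p x
    set L := fderiv ℝ G a with hL
    have hLd : HasFDerivAt G L a := hdiff.hasFDerivAt
    have hxeq : x = ((ψ.symm a : W) : EuclideanSpace ℝ (Fin n)) + G a • e := by
      have := hrecon a haA
      rwa [hΓ x hxT] at this
    -- the key identity for every outer normal w at x
    have key : ∀ w : EuclideanSpace ℝ (Fin n), (∀ y ∈ K, ⟪y, w⟫ ≤ ⟪x, w⟫) →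
        ∀ b : EuclideanSpace ℝ (Fin m),
          ⟪((ψ.symm b : W) : EuclideanSpace ℝ (Fin n)), w⟫ + (L b) * ⟪e, w⟫ = 0 := by
      intro w hw
      set J : EuclideanSpace ℝ (Fin m) →L[ℝ] EuclideanSpace ℝ (Fin n) :=
        W.subtypeL.comp ψ.symm.toLinearIsometry.toContinuousLinearMap with hJ
      have hJa : ∀ b, J b = ((ψ.symm b : W) : EuclideanSpace ℝ (Fin n)) := fun b => rfl
      set M₁ : EuclideanSpace ℝ (Fin m) →L[ℝ] ℝ := (innerSL ℝ w).comp J with hM₁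
      set M : EuclideanSpace ℝ (Fin m) →L[ℝ] ℝ := M₁ + ⟪e, w⟫ • L with hM
      set F : EuclideanSpace ℝ (Fin m) → ℝ :=
        fun b => M₁ (b - a) + (G b - G a) * ⟪e, w⟫ with hF
      have hFa : F a = 0 := by simp [hF]
      have hFd : HasFDerivAt F M a := by
        have h1 : HasFDerivAt (fun b => M₁ (b - a)) M₁ a := by
          have : (fun b : EuclideanSpace ℝ (Fin m) => M₁ (b - a)) = fun b => M₁ b - M₁ a := by
            funext b; rw [map_sub]
          rw [this]
          exact M₁.hasFDerivAt.sub_const (M₁ a)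
        have h2 : HasFDerivAt (fun b => (G b - G a) * ⟪e, w⟫) (⟪e, w⟫ • L) a :=
          (hLd.sub_const (G a)).mul_const ⟪e, w⟫
        exact h1.add h2
      have hFA : ∀ b ∈ A, F b ≤ 0 := by
        intro b hb
        set y := Γ b with hy
        obtain ⟨hyT, hyp⟩ := hΓA b hb
        have hyeq : y = ((ψ.symm b : W) : EuclideanSpace ℝ (Fin n)) + G b • e := hrecon b hb
        have hsub : y - x = J (b - a) + (G b - G a) • e := by
          have hJsub : J (b - a) = ((ψ.symm b : W) : EuclideanSpace ℝ (Fin n))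
              - ((ψ.symm a : W) : EuclideanSpace ℝ (Fin n)) := by
            rw [map_sub, hJa, hJa]
          rw [hyeq, hxeq, hJsub, sub_smul]
          abel
        have hM₁ba : M₁ (b - a) = ⟪J (b - a), w⟫ := by
          rw [hM₁, ContinuousLinearMap.comp_apply, innerSL_apply_apply, real_inner_comm]
        have hinner : ⟪y - x, w⟫ = F b := by
          show ⟪y - x, w⟫ = M₁ (b - a) + (G b - G a) * ⟪e, w⟫
          rw [hsub, inner_add_left, real_inner_smul_left, hM₁ba]
        have hyK : y ∈ K := hyT.1
        have := hw y hyK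
        rw [← sub_nonpos, ← inner_sub_left] at this
        rw [← hinner]
        exact this
      have hM0 : M = 0 := deriv_zero_of_nonpos_on_density hFd hFa hFA hdens
      intro b
      have hMb : M b = 0 := by rw [hM0]; simp
      rw [hM, ContinuousLinearMap.add_apply, ContinuousLinearMap.smul_apply, smul_eq_mul] at hMb
      have hM₁b : M₁ b = ⟪((ψ.symm b : W) : EuclideanSpace ℝ (Fin n)), w⟫ := by
        rw [hM₁, ContinuousLinearMap.comp_apply, hJa, innerSL_apply_apply, real_inner_comm]
      rw [hM₁b] at hMb
      linarith
    -- pairwise identity for normals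
    have hpair : ∀ w₁ w₂ : EuclideanSpace ℝ (Fin n),
        (∀ y ∈ K, ⟪y, w₁⟫ ≤ ⟪x, w₁⟫) → (∀ y ∈ K, ⟪y, w₂⟫ ≤ ⟪x, w₂⟫) →
        ⟪e, w₂⟫ • w₁ = ⟪e, w₁⟫ • w₂ := by
      intro w₁ w₂ h₁ h₂
      set z := ⟪e, w₂⟫ • w₁ - ⟪e, w₁⟫ • w₂ with hz
      have hzW : ∀ w0 ∈ W, ⟪w0, z⟫ = 0 := by
        intro w0 hw0
        have hw0eq : ((ψ.symm (ψ ⟨w0, hw0⟩) : W) : EuclideanSpace ℝ (Fin n)) = w0 := by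
          rw [ψ.symm_apply_apply]
        have k₁ := key w₁ h₁ (ψ ⟨w0, hw0⟩)
        have k₂ := key w₂ h₂ (ψ ⟨w0, hw0⟩)
        rw [hw0eq] at k₁ k₂
        rw [hz, inner_sub_right, real_inner_smul_right, real_inner_smul_right]
        linear_combination ⟪e, w₂⟫ * k₁ - ⟪e, w₁⟫ * k₂
      have hzWp : z ∈ Wᗮ := by
        rw [Submodule.mem_orthogonal]
        intro u hu
        exact hzW u hu
      have hzspan : z ∈ (ℝ ∙ e) := by
        rw [← Submodule.orthogonal_orthogonal (ℝ ∙ e)]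
        exact hzWp
      obtain ⟨c, hc⟩ := Submodule.mem_span_singleton.1 hzspan
      have hze : ⟪z, e⟫ = 0 := by
        rw [hz, inner_sub_left, real_inner_smul_left, real_inner_smul_left,
          real_inner_comm w₁ e, real_inner_comm w₂ e]
        ring
      have hc0 : c = 0 := by
        have : ⟪z, e⟫ = c := by
          rw [← hc, real_inner_smul_left, real_inner_self_eq_norm_sq, he]
          ring
        rw [hze] at this
        exact this.symm
      have : z = 0 := by rw [← hc, hc0, zero_smul]
      rw [hz] at this
      have := sub_eq_zero.1 this
      exact this
    obtain ⟨u, hu, hue⟩ := hxT.2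
    obtain ⟨u₁, u₂, hu₁, hu₂, hne⟩ := hxSing
    have hue' : (0:ℝ) < ⟪e, u⟫ := by rw [real_inner_comm]; linarith
    have h1 := hpair u u₁ hu.2 hu₁.2
    have h2 := hpair u u₂ hu.2 hu₂.2
    -- u₁ and u₂ are multiples of u
    have hmul : ∀ w : EuclideanSpace ℝ (Fin n), IsOuterNormal K x w →
        ⟪e, w⟫ • u = ⟪e, u⟫ • w → w = (⟪e, w⟫ / ⟪e, u⟫) • u := by
      intro w hw hwe
      have : (⟪e, u⟫)⁻¹ • (⟪e, w⟫ • u) = (⟪e, u⟫)⁻¹ • (⟪e, u⟫ • w) := by rw [hwe]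
      rw [smul_smul, smul_smul, inv_mul_cancel₀ hue'.ne', one_smul] at this
      rw [div_eq_inv_mul]
      exact this.symm
    have hm₁ := hmul u₁ hu₁ h1
    have hm₂ := hmul u₂ hu₂ h2
    have habs : ∀ w : EuclideanSpace ℝ (Fin n), IsOuterNormal K x w →
        w = (⟪e, w⟫ / ⟪e, u⟫) • u → |⟪e, w⟫ / ⟪e, u⟫| = 1 := by
      intro w hw hrep
      have hcn := congrArg norm hrep
      rw [norm_smul, Real.norm_eq_abs, hw.1, hu.1, mul_one] at hcn
      exact hcn.symm
    have ha₁ := habs u₁ hu₁ hm₁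
    have ha₂ := habs u₂ hu₂ hm₂
    -- so the coefficients are ±1 and distinct, hence u₂ = -u₁
    have hcases : u₂ = -u₁ := by
      rcases abs_eq (by norm_num : (0:ℝ) ≤ 1) |>.1 ha₁ with e₁ | e₁ <;>
      rcases abs_eq (by norm_num : (0:ℝ) ≤ 1) |>.1 ha₂ with e₂ | e₂
      · exfalso; apply hne; rw [hm₁, hm₂, e₁, e₂]
      · rw [hm₁, hm₂, e₁, e₂, neg_smul, one_smul]
      · rw [hm₁, hm₂, e₁, e₂, neg_smul, one_smul, neg_neg]
      · exfalso; apply hne; rw [hm₁, hm₂, e₁, e₂]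
    -- contradiction with the nonempty interior
    obtain ⟨z₀, hz₀⟩ := hKint
    rw [mem_interior_iff_mem_nhds, Metric.mem_nhds_iff] at hz₀
    obtain ⟨δ, hδ, hball⟩ := hz₀
    have hy₁ : z₀ + (δ/2) • u₁ ∈ K := by
      apply hball
      rw [mem_ball, dist_eq_norm]
      have : z₀ + (δ/2) • u₁ - z₀ = (δ/2) • u₁ := by abel
      rw [this, norm_smul, hu₁.1, mul_one, Real.norm_eq_abs, abs_of_pos (by linarith)]
      linarith
    have hy₂ : z₀ - (δ/2) • u₁ ∈ K := by
      apply hball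
      rw [mem_ball, dist_eq_norm]
      have : z₀ - (δ/2) • u₁ - z₀ = -((δ/2) • u₁) := by abel
      rw [this, norm_neg, norm_smul, hu₁.1, mul_one, Real.norm_eq_abs, abs_of_pos (by linarith)]
      linarith
    have i₁ := hu₁.2 _ hy₁
    have i₂ := hu₂.2 _ hy₂
    rw [hcases] at i₂
    rw [inner_add_left, real_inner_smul_left] at i₁
    rw [inner_neg_right, inner_sub_left, real_inner_smul_left, inner_neg_right] at i₂
    have hself : ⟪u₁, u₁⟫ = 1 := by
      rw [real_inner_self_eq_norm_sq, hu₁.1]; norm_num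
    rw [hself] at i₁ i₂
    linarith
  -- conclude: the singular set has measure zero
  have hvol : volume (p '' (T ∩ Sing)) = 0 :=
    measure_mono_null hcover (by
      refine measure_union_null hN₁ hN₂)
  have hac : (μH[(m:ℝ)] : Measure (EuclideanSpace ℝ (Fin m))) ≪ volume := by
    have hfr : (μH[(m:ℝ)] : Measure (EuclideanSpace ℝ (Fin m)))
        = μH[(finrank ℝ (EuclideanSpace ℝ (Fin m)) : ℝ)] := by
      rw [finrank_euclideanSpace_fin]
    rw [hfr]
    have := @isAddHaarMeasure_hausdorffMeasure (EuclideanSpace ℝ (Fin m)) _ _ _ _ _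
    exact MeasureTheory.Measure.absolutelyContinuous_isAddHaarMeasure _ _
  have hμm : μH[(m:ℝ)] (p '' (T ∩ Sing)) = 0 := hac hvol
  have hsubset : {x | x ∈ K ∧ (∃ u, IsOuterNormal K x u ∧ (3:ℝ)/4 ≤ ⟪u, e⟫) ∧
      ∃ u v, IsOuterNormal K x u ∧ IsOuterNormal K x v ∧ u ≠ v} ⊆ Γ '' (p '' (T ∩ Sing)) := by
    intro x hx
    have hxT : x ∈ T := ⟨hx.1, hx.2.1⟩
    have hxS : x ∈ Sing := hx.2.2
    exact ⟨p x, ⟨x, ⟨hxT, hxS⟩, rfl⟩, hΓ x hxT⟩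
  have hΓlip : LipschitzOnWith 3 Γ (p '' (T ∩ Sing)) := by
    rw [lipschitzOnWith_iff_dist_le_mul]
    rintro a ⟨x', hx', rfl⟩ b ⟨y', hy', rfl⟩
    have hco : ((3:ℝ≥0):ℝ) = 3 := by norm_num
    rw [dist_eq_norm, dist_eq_norm, hΓ x' hx'.1, hΓ y' hy'.1, hco]
    exact hTlip x' hx'.1 y' hy'.1
  have hd0 : (0:ℝ) ≤ (n:ℝ) - 1 := by rw [hcast]; positivity
  refine le_antisymm ?_ zero_le
  calc μH[((n:ℝ)-1)] {x | x ∈ K ∧ (∃ u, IsOuterNormal K x u ∧ (3:ℝ)/4 ≤ ⟪u, e⟫) ∧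
      ∃ u v, IsOuterNormal K x u ∧ IsOuterNormal K x v ∧ u ≠ v}
      ≤ μH[((n:ℝ)-1)] (Γ '' (p '' (T ∩ Sing))) := measure_mono hsubset
    _ ≤ ((3:ℝ≥0) : ℝ≥0∞) ^ ((n:ℝ)-1) * μH[((n:ℝ)-1)] (p '' (T ∩ Sing)) :=
        hΓlip.hausdorffMeasure_image_le hd0
    _ = 0 := by
        rw [hcast, hμm, mul_zero]

lemma singular_null {n : ℕ} (hn : 1 ≤ n) {K : Set (EuclideanSpace ℝ (Fin n))}
    (hKint : (interior K).Nonempty) :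
    μH[((n:ℝ)-1)] {x | x ∈ K ∧
      ∃ u v, IsOuterNormal K x u ∧ IsOuterNormal K x v ∧ u ≠ v} = 0 := by
  obtain ⟨D, hDcount, hDdense⟩ := TopologicalSpace.exists_countable_dense (EuclideanSpace ℝ (Fin n))
  set D' : Set (EuclideanSpace ℝ (Fin n)) :=
    ((fun d => ‖d‖⁻¹ • d) '' D) ∩ {e | ‖e‖ = 1} with hD'
  have hD'count : D'.Countable := (hDcount.image _).mono inter_subset_left
  -- every unit vector is 1/4-close to some element of D'
  have hclose : ∀ u : EuclideanSpace ℝ (Fin n), ‖u‖ = 1 →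
      ∃ e ∈ D', (3:ℝ)/4 ≤ ⟪u, e⟫ := by
    intro u hu
    obtain ⟨d, hdD, hdu⟩ := hDdense.exists_dist_lt u (by norm_num : (0:ℝ) < 1/8)
    have hdun : ‖d - u‖ < 1/8 := by rw [← dist_eq_norm, dist_comm]; exact hdu
    have hdn : |‖d‖ - 1| < 1/8 := by
      have h1 : |‖d‖ - ‖u‖| ≤ ‖d - u‖ := abs_norm_sub_norm_le d u
      rw [hu] at h1
      linarith [abs_le.1 h1]  -- fix below if needed
    have hdpos : (7:ℝ)/8 < ‖d‖ := by
      have := abs_lt.1 hdn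
      linarith [this.1]
    have hdne : d ≠ 0 := by
      intro h
      rw [h, norm_zero] at hdpos
      linarith
    set e := ‖d‖⁻¹ • d with he
    have hen : ‖e‖ = 1 := by
      rw [he, norm_smul, norm_inv, norm_norm]
      exact inv_mul_cancel₀ (norm_ne_zero_iff.2 hdne)
    refine ⟨e, ⟨⟨d, hdD, rfl⟩, hen⟩, ?_⟩
    have hde : ‖d - e‖ < 1/8 := by
      have h1 : d - e = (1 - ‖d‖⁻¹) • d := by
        rw [he, sub_smul, one_smul]
      rw [h1, norm_smul, Real.norm_eq_abs]
      have hdnz : ‖d‖ ≠ 0 := norm_ne_zero_iff.2 hdne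
      have h2 : |1 - ‖d‖⁻¹| * ‖d‖ = |‖d‖ - 1| := by
        rw [← abs_of_nonneg (norm_nonneg d), ← abs_mul]
        congr 1
        field_simp
        rw [abs_of_nonneg (norm_nonneg d)]; ring
      rw [h2]
      exact hdn
    have hue : ‖u - e‖ < 1/4 := by
      calc ‖u - e‖ ≤ ‖u - d‖ + ‖d - e‖ := by
            have : u - e = (u - d) + (d - e) := by abel
            rw [this]; exact norm_add_le _ _
        _ < 1/8 + 1/8 := by
            rw [← norm_neg (u - d)]
            have : -(u - d) = d - u := by abel
            rw [this]
            exact add_lt_add hdun hde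
        _ = 1/4 := by norm_num
    have hsq := norm_sub_sq_real u e
    rw [hu, hen] at hsq
    nlinarith [norm_nonneg (u - e)]
  -- cover the singular set
  have hcover : {x | x ∈ K ∧ ∃ u v, IsOuterNormal K x u ∧ IsOuterNormal K x v ∧ u ≠ v}
      ⊆ ⋃ e ∈ D', {x | x ∈ K ∧ (∃ u, IsOuterNormal K x u ∧ (3:ℝ)/4 ≤ ⟪u, e⟫) ∧
        ∃ u v, IsOuterNormal K x u ∧ IsOuterNormal K x v ∧ u ≠ v} := by
    rintro x ⟨hxK, u, v, hu, hv, hne⟩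
    obtain ⟨e, heD, hee⟩ := hclose u hu.1
    exact mem_biUnion heD ⟨hxK, ⟨u, hu, hee⟩, u, v, hu, hv, hne⟩
  refine measure_mono_null hcover ?_
  refine (measure_biUnion_null_iff hD'count).2 ?_
  intro e heD'
  exact singular_near_e_null hn hKint heD'.2

/-- For the Wulff shape `K` associated with `(C, ω, f)`, the surface area measure
vanishes outside `ω`, and also on the set of `v ∈ ω` where `-h(K,v) ≠ f(v)`. -/
theorem wulff_shape_surface_measure_concentrated {n : ℕ}
    (C : Set (EuclideanSpace ℝ (Fin n)))
    (hC_closed : IsClosed C) (hC_conv : Convex ℝ C)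
    (hC_cone : ∀ x ∈ C, ∀ r : ℝ, 0 ≤ r → r • x ∈ C)
    (hC_pointed : C ∩ (-C) = {0})
    (hC_int : (interior C).Nonempty)
    (ω : Set (EuclideanSpace ℝ (Fin n)))
    (hω : ω ⊆ Metric.sphere (0 : EuclideanSpace ℝ (Fin n)) 1 ∩
        interior {x : EuclideanSpace ℝ (Fin n) | ∀ y ∈ C, ⟪x, y⟫ ≤ 0})
    (hωcompact : IsCompact ω) (hωne : ω.Nonempty)
    (f : EuclideanSpace ℝ (Fin n) → ℝ) (hfpos : ∀ u ∈ ω, 0 < f u)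
    (hfcont : ContinuousOn f ω)
    (K : Set (EuclideanSpace ℝ (Fin n)))
    (hK : K = C ∩ ⋂ u ∈ ω, {x : EuclideanSpace ℝ (Fin n) | ⟪x, u⟫ ≤ -f u}) :
    μH[((n : ℝ) - 1)] (revSphImage K
        ((Metric.sphere (0 : EuclideanSpace ℝ (Fin n)) 1 ∩
          interior {x : EuclideanSpace ℝ (Fin n) | ∀ y ∈ C, ⟪x, y⟫ ≤ 0}) \ ω)) = 0 ∧
    μH[((n : ℝ) - 1)] (revSphImage K
        {v ∈ ω | -sSup ((fun y => ⟪y, v⟫) '' K) ≠ f v}) = 0 := by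
  classical
  obtain ⟨u₀, hu₀ω⟩ := hωne
  have hu₀sphere := (hω hu₀ω).1
  have hu₀norm : ‖u₀‖ = 1 := by rwa [mem_sphere_zero_iff_norm] at hu₀sphere
  -- the dimension is at least 1
  have hn : 1 ≤ n := by
    by_contra h
    have hn0 : n = 0 := by omega
    subst hn0
    have : u₀ = 0 := Subsingleton.elim u₀ 0
    rw [this, norm_zero] at hu₀norm
    norm_num at hu₀norm
  -- unit vectors in ω
  have hωnorm : ∀ u ∈ ω, ‖u‖ = 1 := by
    intro u hu
    have := (hω hu).1
    rwa [mem_sphere_zero_iff_norm] at this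
  -- membership conditions for K
  have hKmem : ∀ x, x ∈ K ↔ x ∈ C ∧ ∀ u ∈ ω, ⟪x, u⟫ ≤ -f u := by
    intro x
    rw [hK]
    simp only [mem_inter_iff, mem_iInter, mem_setOf_eq]
  have hKsub : K ⊆ C := fun x hx => ((hKmem x).1 hx).1
  have hfK : ∀ x ∈ K, ∀ u ∈ ω, ⟪x, u⟫ ≤ -f u := fun x hx => ((hKmem x).1 hx).2
  -- K is closed
  have hKclosed : IsClosed K := by
    rw [hK]
    refine hC_closed.inter (isClosed_biInter fun u hu => ?_)
    exact isClosed_le (Continuous.inner continuous_id continuous_const) continuous_const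
  -- x ∈ K implies x ≠ 0
  have hKne0 : ∀ x ∈ K, x ≠ 0 := by
    intro x hx h0
    have h1 := hfK x hx u₀ hu₀ω
    rw [h0] at h1
    have : ⟪(0 : EuclideanSpace ℝ (Fin n)), u₀⟫ = 0 := inner_zero_left u₀
    rw [this] at h1
    linarith [hfpos u₀ hu₀ω]
  -- strict negativity of inner products against interior polar vectors
  have hpolar : ∀ u ∈ interior {x : EuclideanSpace ℝ (Fin n) | ∀ y ∈ C, ⟪x, y⟫ ≤ 0},
      ∀ x ∈ C, x ≠ 0 → ⟪x, u⟫ < 0 := by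
    intro u hu x hxC hx0
    rw [mem_interior_iff_mem_nhds, Metric.mem_nhds_iff] at hu
    obtain ⟨ε, hε, hball⟩ := hu
    set u' := u + (ε/2) • (‖x‖⁻¹ • x) with hu'
    have hxnorm : (0:ℝ) < ‖x‖ := norm_pos_iff.2 hx0
    have hu'mem : u' ∈ ball u ε := by
      rw [mem_ball, dist_eq_norm, hu']
      have h1 : u + (ε/2) • ‖x‖⁻¹ • x - u = (ε/2) • ‖x‖⁻¹ • x := by abel
      have h2 : ‖(ε/2) • (‖x‖⁻¹ • x)‖ = ε/2 := by
        rw [norm_smul, norm_smul, norm_inv, norm_norm, inv_mul_cancel₀ hxnorm.ne', mul_one,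
          Real.norm_eq_abs, abs_of_pos (by linarith : (0:ℝ) < ε/2)]
      rw [h1, h2]
      linarith
    have hu'pol := hball hu'mem
    have h2 : ⟪u', x⟫ ≤ 0 := hu'pol x hxC
    rw [hu', inner_add_left, real_inner_smul_left, real_inner_smul_left,
      real_inner_self_eq_norm_sq] at h2
    have h3 : ⟪u, x⟫ + (ε/2) * (‖x‖⁻¹ * ‖x‖^2) ≤ 0 := h2
    rw [real_inner_comm]
    have h4 : ‖x‖⁻¹ * ‖x‖^2 = ‖x‖ := by field_simp [hxnorm.ne']
    rw [h4] at h3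
    nlinarith
  -- interior of K is nonempty
  have hKint : (interior K).Nonempty := by
    -- find a nonzero center of a ball inside C
    obtain ⟨z₀, hz₀⟩ := hC_int
    rw [mem_interior_iff_mem_nhds, Metric.mem_nhds_iff] at hz₀
    obtain ⟨δ₀, hδ₀, hball₀⟩ := hz₀
    obtain ⟨z₁, δ, hδ, hz₁0, hball⟩ :
        ∃ z₁ : EuclideanSpace ℝ (Fin n), ∃ δ : ℝ, 0 < δ ∧ z₁ ≠ 0 ∧ ball z₁ δ ⊆ C := by
      rcases eq_or_ne z₀ 0 with rfl | hz₀0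
      · set w : EuclideanSpace ℝ (Fin n) := EuclideanSpace.single ⟨0, by omega⟩ (δ₀/4) with hwdef
        refine ⟨w, δ₀/2, by linarith, ?_, ?_⟩
        · intro h
          have := congrArg (fun z : EuclideanSpace ℝ (Fin n) => z ⟨0, by omega⟩) h
          simp [hwdef, EuclideanSpace.single_apply] at this
          linarith
        · intro y hy
          apply hball₀
          rw [mem_ball] at hy ⊢
          have hwnorm : ‖w‖ = δ₀/4 := by
            rw [hwdef, EuclideanSpace.norm_single, Real.norm_eq_abs, abs_of_pos (by linarith)]
          calc dist y 0 ≤ dist y w + dist w 0 := dist_triangle _ _ _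
            _ < δ₀/2 + δ₀/4 := by
                refine add_lt_add_of_lt_of_le hy ?_
                rw [dist_zero_right, hwnorm]
            _ < δ₀ := by linarith
      · exact ⟨z₀, δ₀, hδ₀, hz₀0, hball₀⟩
    -- interior points of the polar are uniformly negative on z₁
    have hz₁C : z₁ ∈ C := hball (mem_ball_self hδ)
    have hz₁u : ∀ u ∈ ω, ⟪z₁, u⟫ ≤ -(δ/2) := by
      intro u hu
      have hunorm := hωnorm u hu
      have hmem : z₁ + (δ/2) • u ∈ ball z₁ δ := by
        rw [mem_ball, dist_eq_norm]
        have h1 : z₁ + (δ/2) • u - z₁ = (δ/2) • u := by abel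
        rw [h1, norm_smul, hunorm, mul_one, Real.norm_eq_abs, abs_of_pos (by linarith)]
        linarith
      have hC1 := hball hmem
      have hpol : ∀ y ∈ C, ⟪u, y⟫ ≤ 0 := interior_subset (hω hu).2
      have h2 := hpol _ hC1
      rw [inner_add_right, real_inner_smul_right, real_inner_self_eq_norm_sq, hunorm] at h2
      rw [real_inner_comm]
      nlinarith
    -- a bound for f on ω
    obtain ⟨uM, huM, hfM'⟩ := hωcompact.exists_isMaxOn ⟨u₀, hu₀ω⟩ hfcont
    have hfM : ∀ u ∈ ω, f u ≤ f uM := fun u hu => hfM' hu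
    set Mf := f uM with hMf
    -- the scaled point
    set r := (2 * (Mf + 1)) / δ with hr
    have hMfpos : 0 < Mf := hfpos uM huM
    have hrpos : 0 < r := by rw [hr]; positivity
    set z := r • z₁ with hz
    have hzu : ∀ u ∈ ω, ⟪z, u⟫ ≤ -f u - 1 := by
      intro u hu
      rw [hz, real_inner_smul_left]
      have h1 := hz₁u u hu
      have h2 : r * ⟪z₁, u⟫ ≤ r * (-(δ/2)) := by
        exact mul_le_mul_of_nonneg_left h1 hrpos.le
      have h3 : r * (-(δ/2)) = -(Mf + 1) := by
        rw [hr]; field_simp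
      have h4 := hfM u hu
      rw [h3] at h2
      linarith
    set ρ := min (r * δ) 1 with hρ
    have hρpos : 0 < ρ := lt_min (by positivity) one_pos
    refine ⟨z, ?_⟩
    rw [mem_interior]
    refine ⟨ball z ρ, ?_, isOpen_ball, mem_ball_self hρpos⟩
    intro y hy
    rw [mem_ball, dist_eq_norm] at hy
    rw [hKmem]
    constructor
    · -- y ∈ C by the cone property
      have h1 : r⁻¹ • y ∈ ball z₁ δ := by
        rw [mem_ball, dist_eq_norm]
        have h2 : r⁻¹ • y - z₁ = r⁻¹ • (y - z) := by
          rw [smul_sub, hz, smul_smul, inv_mul_cancel₀ hrpos.ne', one_smul]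
        rw [h2, norm_smul, Real.norm_eq_abs, abs_of_pos (inv_pos.2 hrpos)]
        have h3 : ‖y - z‖ < r * δ := lt_of_lt_of_le hy (min_le_left _ _)
        calc r⁻¹ * ‖y - z‖ < r⁻¹ * (r * δ) := by
              exact mul_lt_mul_of_pos_left h3 (inv_pos.2 hrpos)
          _ = δ := by field_simp
      have h2 := hball h1
      have h3 := hC_cone _ h2 r hrpos.le
      rwa [smul_smul, mul_inv_cancel₀ hrpos.ne', one_smul] at h3
    · intro u hu
      have h1 : ⟪y, u⟫ = ⟪z, u⟫ + ⟪y - z, u⟫ := by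
        rw [← inner_add_left]
        congr 1
        abel
      have h2 : ⟪y - z, u⟫ ≤ ‖y - z‖ := by
        have := abs_real_inner_le_norm (y - z) u
        rw [hωnorm u hu, mul_one] at this
        linarith [le_abs_self ⟪y - z, u⟫]
      have h3 : ‖y - z‖ < 1 := lt_of_lt_of_le hy (min_le_right _ _)
      have h4 := hzu u hu
      rw [h1]
      linarith
  -- every frontier point has a normal with zero inner product, or an active constraint
  have hfrontier : ∀ x ∈ frontier K,
      (∃ w, IsOuterNormal K x w ∧ ⟪x, w⟫ = 0) ∨ (∃ u' ∈ ω, ⟪x, u'⟫ = -f u') := by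
    intro x hxF
    have hxK : x ∈ K := hKclosed.frontier_subset hxF
    have hxC : x ∈ C := hKsub hxK
    by_cases hact : ∃ u' ∈ ω, ⟪x, u'⟫ = -f u'
    · exact Or.inr hact
    push_neg at hact
    have hstrict : ∀ u ∈ ω, ⟪x, u⟫ < -f u :=
      fun u hu => lt_of_le_of_ne (hfK x hxK u hu) (hact u hu)
    by_cases hxint : x ∈ interior C
    · -- then x would be an interior point of K, contradiction
      exfalso
      have hcont : ContinuousOn (fun u => -f u - ⟪x, u⟫) ω := by
        refine ContinuousOn.sub (hfcont.neg) ?_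
        exact (Continuous.inner continuous_const continuous_id).continuousOn
      obtain ⟨um, hum, hum'⟩ := hωcompact.exists_isMinOn ⟨u₀, hu₀ω⟩ hcont
      have humle : ∀ u ∈ ω, -f um - ⟪x, um⟫ ≤ -f u - ⟪x, u⟫ := fun u hu => hum' hu
      set δ' := -f um - ⟪x, um⟫ with hδ'
      have hδ'pos : 0 < δ' := by
        have := hstrict um hum
        rw [hδ']
        linarith
      have hsub : ball x δ' ∩ interior C ⊆ K := by
        rintro y ⟨hy1, hy2⟩
        rw [hKmem]
        refine ⟨interior_subset hy2, fun u hu => ?_⟩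
        have h1 : ⟪y, u⟫ = ⟪x, u⟫ + ⟪y - x, u⟫ := by
          rw [← inner_add_left]; congr 1; abel
        have h2 : ⟪y - x, u⟫ ≤ ‖y - x‖ := by
          have := abs_real_inner_le_norm (y - x) u
          rw [hωnorm u hu, mul_one] at this
          linarith [le_abs_self ⟪y - x, u⟫]
        have h3 : ‖y - x‖ < δ' := by rwa [mem_ball, dist_eq_norm] at hy1
        have h4 := humle u hu
        rw [h1]
        simp only [hδ'] at h4 ⊢
        linarith
      have hxintK : x ∈ interior K := by
        rw [mem_interior]
        exact ⟨ball x δ' ∩ interior C, hsub, isOpen_ball.inter isOpen_interior,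
          ⟨mem_ball_self hδ'pos, hxint⟩⟩
      rw [frontier, mem_diff] at hxF
      exact hxF.2 hxintK
    · -- supporting hyperplane at x
      left
      obtain ⟨φ, hφ⟩ := geometric_hahn_banach_open_point (hC_conv.interior) isOpen_interior hxint
      -- φ y ≤ φ x for all y ∈ C
      have hφC : ∀ y ∈ C, φ y ≤ φ x := by
        intro y hyC
        by_contra hcon
        push_neg at hcon
        obtain ⟨z', hz'⟩ := hC_int
        have hz'lt := hφ z' hz'
        set t := (φ y - φ x) / (φ y - φ z') with htdef
        have hd1 : φ z' < φ x := hz'lt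
        have hd2 : 0 < φ y - φ z' := by linarith
        have ht0 : 0 < t := div_pos (by linarith) hd2
        have ht1 : t < 1 := by
          rw [htdef, div_lt_one hd2]
          linarith
        have hmem : (1 - t) • y + t • z' ∈ interior C :=
          hC_conv.combo_closure_interior_mem_interior (subset_closure hyC) hz'
            (by linarith) ht0 (by ring)
        have := hφ _ hmem
        rw [map_add, φ.map_smul, φ.map_smul, smul_eq_mul, smul_eq_mul] at this
        have heq : (1 - t) * φ y + t * φ z' = φ x := by
          rw [htdef]
          field_simp
          ring
        linarith
      have hφx : φ x = 0 := by
        have h0C : (0 : EuclideanSpace ℝ (Fin n)) ∈ C := by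
          have := hC_cone x hxC 0 le_rfl
          rwa [zero_smul] at this
        have h2C : (2:ℝ) • x ∈ C := hC_cone x hxC 2 (by norm_num)
        have h1 := hφC 0 h0C
        have h2 := hφC _ h2C
        rw [map_zero] at h1
        rw [φ.map_smul, smul_eq_mul] at h2
        linarith
      set w₀ := (InnerProductSpace.toDual ℝ (EuclideanSpace ℝ (Fin n))).symm φ with hw₀
      have hw₀app : ∀ y, ⟪w₀, y⟫ = φ y := fun y => InnerProductSpace.toDual_symm_apply
      have hw₀ne : w₀ ≠ 0 := by
        intro h
        obtain ⟨z', hz'⟩ := hC_int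
        have h1 := hφ z' hz'
        have h2 := hw₀app z'
        have h3 := hw₀app x
        rw [h] at h2 h3
        rw [inner_zero_left] at h2 h3
        rw [← h2, ← h3] at h1
        exact lt_irrefl _ h1
      have hw₀pos : (0:ℝ) < ‖w₀‖ := norm_pos_iff.2 hw₀ne
      refine ⟨‖w₀‖⁻¹ • w₀, ⟨?_, ?_⟩, ?_⟩
      · rw [norm_smul, norm_inv, norm_norm]
        exact inv_mul_cancel₀ hw₀pos.ne'
      · intro y hyK
        have e1 : ⟪y, ‖w₀‖⁻¹ • w₀⟫ = ‖w₀‖⁻¹ * φ y := by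
          rw [real_inner_smul_right, real_inner_comm, hw₀app]
        have e2 : ⟪x, ‖w₀‖⁻¹ • w₀⟫ = ‖w₀‖⁻¹ * φ x := by
          rw [real_inner_smul_right, real_inner_comm, hw₀app]
        rw [e1, e2]
        exact mul_le_mul_of_nonneg_left (hφC y (hKsub hyK)) (inv_pos.2 hw₀pos).le
      · have e2 : ⟪x, ‖w₀‖⁻¹ • w₀⟫ = ‖w₀‖⁻¹ * φ x := by
          rw [real_inner_smul_right, real_inner_comm, hw₀app]
        rw [e2, hφx, mul_zero]
  -- both exceptional sets consist of points with two distinct outer normals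
  set SingSet : Set (EuclideanSpace ℝ (Fin n)) := {x | x ∈ K ∧
      ∃ u v, IsOuterNormal K x u ∧ IsOuterNormal K x v ∧ u ≠ v} with hSS
  have hSing0 : μH[((n : ℝ) - 1)] SingSet = 0 := singular_null hn hKint
  constructor
  · refine measure_mono_null ?_ hSing0
    rintro x ⟨hxF, u, hu, huN⟩
    have hxK : x ∈ K := hKclosed.frontier_subset hxF
    rw [mem_diff] at hu
    have huΩ := hu.1
    have huω := hu.2
    refine ⟨hxK, ?_⟩
    rcases hfrontier x hxF with ⟨w, hwN, hw0⟩ | ⟨u', hu'ω, hu'act⟩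
    · refine ⟨u, w, huN, hwN, ?_⟩
      intro h
      have hxu : ⟪x, u⟫ < 0 := hpolar u huΩ.2 x (hKsub hxK) (hKne0 x hxK)
      rw [h, hw0] at hxu
      exact lt_irrefl _ hxu
    · refine ⟨u, u', huN, ⟨hωnorm u' hu'ω, ?_⟩, ?_⟩
      · intro y hyK
        rw [hu'act]
        exact hfK y hyK u' hu'ω
      · intro h
        rw [h] at huω
        exact huω hu'ω
  · refine measure_mono_null ?_ hSing0
    rintro x ⟨hxF, v, hv, hvN⟩
    have hxK : x ∈ K := hKclosed.frontier_subset hxF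
    rw [mem_setOf_eq] at hv
    obtain ⟨hvω, hvne⟩ := hv
    have hsup : sSup ((fun y => ⟪y, v⟫) '' K) = ⟪x, v⟫ := by
      apply IsGreatest.csSup_eq
      constructor
      · exact ⟨x, hxK, rfl⟩
      · rintro s ⟨y, hyK, rfl⟩
        exact hvN.2 y hyK
    have hxvlt : ⟪x, v⟫ < -f v := by
      refine lt_of_le_of_ne (hfK x hxK v hvω) ?_
      intro h
      apply hvne
      rw [hsup, h]
      ring
    refine ⟨hxK, ?_⟩
    rcases hfrontier x hxF with ⟨w, hwN, hw0⟩ | ⟨u', hu'ω, hu'act⟩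
    · refine ⟨v, w, hvN, hwN, ?_⟩
      intro h
      have : ⟪x, v⟫ < 0 := by
        have := hfpos v hvω
        linarith
      rw [h, hw0] at this
      exact lt_irrefl _ this
    · refine ⟨v, u', hvN, ⟨hωnorm u' hu'ω, ?_⟩, ?_⟩
      · intro y hyK
        rw [hu'act]
        exact hfK y hyK u' hu'ω
      · intro h
        rw [← h] at hu'act
        rw [hu'act] at hxvlt
        exact lt_irrefl _ hxvlt
end

section
/- Let $C \subset \mathbb{R}^n$ be a pointed closed convex cone with nonempty interior, $\omega \subset \Omega_C$ a nonempty compact set, and $f_j : \omega \to (0, \infty)$ continuous functions for $j \in \mathbb{N}_0$ such that $f_j \to f_0$ uniformly on $\omega$. Let $K_j$ be the Wulff shape associated with $(C, \omega, f_j)$. Then $K_j \to K_0$ in the sense that $K_j \cap C_t \to K_0 \cap C_t$ in the Hausdorff metric for all sufficiently large $t$, where $C_t = C \cap \{x : \langle x, w \rangle \le t\}$ for a fixed unit vector $w$ with $\langle x, w\rangle > 0$ on $C \setminus \{0\}$. -/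
open Set Pointwise MeasureTheory RealInnerProductSpace Filter
open scoped Topology

set_option maxHeartbeats 1600000 in
/-- Continuity of the Wulff shape: if positive continuous functions `f j` converge
uniformly on the nonempty compact set `ω ⊂ Ω_C` to `f₀`, then the associated Wulff
shapes converge, in the sense that the truncations `K_j ∩ C_t` converge to
`K₀ ∩ C_t` in the Hausdorff metric for all sufficiently large `t`. -/
theorem wulff_shape_convergence {n : ℕ}
    (C : Set (EuclideanSpace ℝ (Fin n)))
    (hC_closed : IsClosed C) (hC_conv : Convex ℝ C)
    (hC_cone : ∀ x ∈ C, ∀ r : ℝ, 0 ≤ r → r • x ∈ C)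
    (hC_pointed : C ∩ (-C) = {0})
    (hC_int : (interior C).Nonempty)
    (ω : Set (EuclideanSpace ℝ (Fin n)))
    (hω : ω ⊆ Metric.sphere (0 : EuclideanSpace ℝ (Fin n)) 1 ∩
        interior {x : EuclideanSpace ℝ (Fin n) | ∀ y ∈ C, ⟪x, y⟫ ≤ 0})
    (hωcompact : IsCompact ω) (hωne : ω.Nonempty)
    (w : EuclideanSpace ℝ (Fin n)) (hwnorm : ‖w‖ = 1)
    (hwpos : ∀ x ∈ C, x ≠ 0 → 0 < ⟪x, w⟫)
    (f : ℕ → EuclideanSpace ℝ (Fin n) → ℝ)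
    (f₀ : EuclideanSpace ℝ (Fin n) → ℝ)
    (hfpos : ∀ j, ∀ u ∈ ω, 0 < f j u) (hfcont : ∀ j, ContinuousOn (f j) ω)
    (hf₀pos : ∀ u ∈ ω, 0 < f₀ u) (hf₀cont : ContinuousOn f₀ ω)
    (hconv : TendstoUniformlyOn f f₀ atTop ω) :
    ∃ t₀ : ℝ, 0 < t₀ ∧ ∀ t : ℝ, t₀ ≤ t →
      Tendsto (fun j => Metric.hausdorffDist
          ((C ∩ ⋂ u ∈ ω, {x : EuclideanSpace ℝ (Fin n) | ⟪x, u⟫ ≤ -f j u}) ∩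
            (C ∩ {x : EuclideanSpace ℝ (Fin n) | ⟪x, w⟫ ≤ t}))
          ((C ∩ ⋂ u ∈ ω, {x : EuclideanSpace ℝ (Fin n) | ⟪x, u⟫ ≤ -f₀ u}) ∩
            (C ∩ {x : EuclideanSpace ℝ (Fin n) | ⟪x, w⟫ ≤ t})))
        atTop (𝓝 0) := by
  classical
  obtain ⟨u₀, hu₀ω⟩ := hωne
  have hu₀norm : ‖u₀‖ = 1 := by
    have := (hω hu₀ω).1
    simpa using this
  -- a nonzero point of C
  obtain ⟨p, hp⟩ := hC_int
  obtain ⟨y₀, hy₀C, hy₀ne⟩ : ∃ y₀ ∈ C, y₀ ≠ (0 : EuclideanSpace ℝ (Fin n)) := by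
    by_cases hp0 : p = 0
    · obtain ⟨r, hr, hball⟩ := Metric.isOpen_iff.1 isOpen_interior p hp
      refine ⟨(r/2) • u₀, interior_subset (hball ?_), ?_⟩
      · rw [Metric.mem_ball, hp0, dist_zero_right, norm_smul, hu₀norm]
        rw [Real.norm_eq_abs, abs_of_pos (by linarith)]
        linarith
      · intro h
        have : ‖(r/2) • u₀‖ = 0 := by rw [h]; simp
        rw [norm_smul, hu₀norm, Real.norm_eq_abs, abs_of_pos (by linarith)] at this
        linarith
    · exact ⟨p, interior_subset hp, hp0⟩
  have hy₀n : (0:ℝ) < ‖y₀‖ := norm_pos_iff.2 hy₀ne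
  -- the constant c with c‖x‖ ≤ ⟪x,w⟫ on C
  have hsC : IsCompact (C ∩ Metric.sphere (0 : EuclideanSpace ℝ (Fin n)) 1) :=
    (isCompact_sphere 0 1).inter_left hC_closed
  have hsne : (C ∩ Metric.sphere (0 : EuclideanSpace ℝ (Fin n)) 1).Nonempty := by
    refine ⟨‖y₀‖⁻¹ • y₀, hC_cone _ hy₀C _ (by positivity), ?_⟩
    simp [norm_smul, abs_of_pos (inv_pos.2 hy₀n), inv_mul_cancel₀ hy₀n.ne']
  obtain ⟨xm, hxm, hxmin⟩ := hsC.exists_isMinOn hsne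
    ((continuous_id.inner continuous_const).continuousOn :
      ContinuousOn (fun x : EuclideanSpace ℝ (Fin n) => ⟪x, w⟫) _)
  set c : ℝ := ⟪xm, w⟫ with hcdef
  have hxmne : xm ≠ 0 := by
    intro h
    have := hxm.2
    rw [h] at this
    simp at this
  have hcpos : 0 < c := hwpos xm hxm.1 hxmne
  have hc : ∀ x ∈ C, c * ‖x‖ ≤ ⟪x, w⟫ := by
    intro x hx
    rcases eq_or_ne x 0 with rfl | hx0
    · simp
    · have hxn : (0:ℝ) < ‖x‖ := norm_pos_iff.2 hx0
      have hmem : ‖x‖⁻¹ • x ∈ C ∩ Metric.sphere (0 : EuclideanSpace ℝ (Fin n)) 1 := by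
        refine ⟨hC_cone _ hx _ (by positivity), ?_⟩
        simp [norm_smul, abs_of_pos (inv_pos.2 hxn), inv_mul_cancel₀ hxn.ne']
      have h1 : c ≤ ‖x‖⁻¹ * ⟪x, w⟫ := by
        have h2 : ⟪‖x‖⁻¹ • x, w⟫ = ‖x‖⁻¹ * ⟪x, w⟫ := real_inner_smul_left _ _ _
        have h1' : c ≤ ⟪‖x‖⁻¹ • x, w⟫ := hxmin hmem
        linarith
      rw [mul_comm]
      calc ‖x‖ * c ≤ ‖x‖ * (‖x‖⁻¹ * ⟪x, w⟫) := by
            exact mul_le_mul_of_nonneg_left h1 hxn.le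
        _ = ⟪x, w⟫ := by field_simp
  -- max and min of f₀ on ω
  obtain ⟨uM, huM, hM⟩ := hωcompact.exists_isMaxOn ⟨u₀, hu₀ω⟩ hf₀cont
  obtain ⟨um, hum, hm⟩ := hωcompact.exists_isMinOn ⟨u₀, hu₀ω⟩ hf₀cont
  set M : ℝ := f₀ uM with hMdef
  set m : ℝ := f₀ um with hmdef
  have hmpos : 0 < m := hf₀pos um hum
  have hMm : m ≤ M := hM hum
  -- each u in ω is strictly negative on y₀
  have hneg : ∀ u ∈ ω, ⟪u, y₀⟫ < 0 := by
    intro u hu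
    have h1 := (hω hu).2
    obtain ⟨ε, hε, hball⟩ := Metric.isOpen_iff.1 isOpen_interior u h1
    set v : EuclideanSpace ℝ (Fin n) := (ε / (2 * ‖y₀‖)) • y₀ with hv
    have hvnorm : ‖v‖ = ε / 2 := by
      rw [hv, norm_smul, Real.norm_eq_abs, abs_of_pos (by positivity)]
      field_simp
    have hmem : u + v ∈ interior {x : EuclideanSpace ℝ (Fin n) | ∀ y ∈ C, ⟪x, y⟫ ≤ 0} := by
      apply hball
      rw [Metric.mem_ball, dist_eq_norm, add_sub_cancel_left, hvnorm]
      linarith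
    have h2 : ⟪u + v, y₀⟫ ≤ 0 := (interior_subset hmem) y₀ hy₀C
    have h3 : ⟪v, y₀⟫ = (ε / (2 * ‖y₀‖)) * ‖y₀‖ ^ 2 := by
      rw [hv, real_inner_smul_left, real_inner_self_eq_norm_sq]
    have h4 : (0:ℝ) < ⟪v, y₀⟫ := by rw [h3]; positivity
    have h5 : ⟪u + v, y₀⟫ = ⟪u, y₀⟫ + ⟪v, y₀⟫ := inner_add_left _ _ _
    linarith
  -- uniform negativity on ω
  obtain ⟨uδ, huδ, hδmax⟩ := hωcompact.exists_isMaxOn ⟨u₀, hu₀ω⟩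
    ((continuous_id.inner continuous_const).continuousOn :
      ContinuousOn (fun u : EuclideanSpace ℝ (Fin n) => ⟪u, y₀⟫) _)
  set δ₀ : ℝ := -⟪uδ, y₀⟫ with hδ₀def
  have hδ₀pos : 0 < δ₀ := by
    have h := hneg uδ huδ
    have h2 : δ₀ = -⟪uδ, y₀⟫ := hδ₀def
    linarith
  have hδ₀ : ∀ u ∈ ω, ⟪u, y₀⟫ ≤ -δ₀ := by
    intro u hu
    have h : ⟪u, y₀⟫ ≤ ⟪uδ, y₀⟫ := hδmax hu
    have h2 : δ₀ = -⟪uδ, y₀⟫ := hδ₀def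
    linarith
  -- the deep point z
  set z : EuclideanSpace ℝ (Fin n) := ((M + 1) / δ₀) • y₀ with hzdef
  have hzC : z ∈ C := hC_cone _ hy₀C _ (div_nonneg (by linarith) hδ₀pos.le)
  have hzu : ∀ u ∈ ω, ⟪z, u⟫ ≤ -(M + 1) := by
    intro u hu
    have h1 : ⟪z, u⟫ = ((M + 1) / δ₀) * ⟪y₀, u⟫ := real_inner_smul_left _ _ _
    have h2 : ⟪y₀, u⟫ ≤ -δ₀ := by rw [real_inner_comm]; exact hδ₀ u hu
    have h3 : (0:ℝ) < (M + 1) / δ₀ := div_pos (by linarith) hδ₀pos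
    calc ⟪z, u⟫ = ((M + 1) / δ₀) * ⟪y₀, u⟫ := h1
      _ ≤ ((M + 1) / δ₀) * (-δ₀) := mul_le_mul_of_nonneg_left h2 h3.le
      _ = -(M + 1) := by
          field_simp
  have hzne : z ≠ 0 := by
    intro h
    have := hzu u₀ hu₀ω
    rw [h] at this
    simp only [inner_zero_left] at this
    linarith [hzu u₀ hu₀ω, hmpos, hMm]
  have htzpos : 0 < ⟪z, w⟫ := hwpos z hzC hzne
  refine ⟨2 * ⟪z, w⟫, by linarith, ?_⟩
  intro t ht
  have htpos : 0 < t := lt_of_lt_of_le (by linarith) ht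
  have htz2 : ⟪z, w⟫ ≤ t / 2 := by linarith
  rw [Metric.tendsto_atTop]
  intro ε hε
  set η : ℝ := min (min (m / 3) 1) (ε * m * c / (42 * t)) with hηdef
  have hηpos : 0 < η := by
    apply lt_min (lt_min (by positivity) one_pos) (by positivity)
  have hηm : η ≤ m / 3 := le_trans (min_le_left _ _) (min_le_left _ _)
  have hη1 : η ≤ 1 := le_trans (min_le_left _ _) (min_le_right _ _)
  have hηε : η ≤ ε * m * c / (42 * t) := min_le_right _ _
  have hmη : 0 < m - η := by linarith
  set lam : ℝ := (m + η) / (m - η) with hlamdef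
  have hlam1 : 1 ≤ lam := by
    rw [hlamdef, le_div_iff₀ hmη]; linarith
  have hlam2 : lam ≤ 2 := by
    rw [hlamdef, div_le_iff₀ hmη]; linarith
  have hlam1' : m * (lam - 1) ≤ 3 * η := by
    have h : lam * (m - η) = m + η := by
      rw [hlamdef]; field_simp
    have h2 : lam * η ≤ 2 * η := mul_le_mul_of_nonneg_right hlam2 hηpos.le
    nlinarith [h, h2]
  -- the key geometric estimate
  set r : ℝ := 21 * η * t / (m * c) with hrdef
  have hrpos : 0 < r := by positivity
  have key : ∀ x : EuclideanSpace ℝ (Fin n), x ∈ C → (∀ u ∈ ω, ⟪x, u⟫ ≤ -(f₀ u - η)) →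
      ⟪x, w⟫ ≤ t →
      ∃ y : EuclideanSpace ℝ (Fin n), y ∈ C ∧ (∀ u ∈ ω, ⟪y, u⟫ ≤ -(f₀ u + η)) ∧
        ⟪y, w⟫ ≤ t ∧ dist x y ≤ r := by
    intro x hxC hxu hxt
    have hxct : c * ‖x‖ ≤ t := le_trans (hc x hxC) hxt
    have hxw0 : 0 ≤ ⟪x, w⟫ := le_trans (by positivity) (hc x hxC)
    have hlx : lam • x ∈ C := hC_cone x hxC lam (by linarith)
    have hlxu : ∀ u ∈ ω, ⟪lam • x, u⟫ ≤ -(f₀ u + η) := by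
      intro u hu
      have h1 := hxu u hu
      have hf : m ≤ f₀ u := hm hu
      rw [real_inner_smul_left]
      have h2 : lam * ⟪x, u⟫ ≤ lam * (-(f₀ u - η)) :=
        mul_le_mul_of_nonneg_left h1 (by linarith)
      have h3 : f₀ u + η ≤ lam * (f₀ u - η) := by
        rw [hlamdef, div_mul_eq_mul_div, le_div_iff₀ hmη]
        nlinarith [mul_nonneg hηpos.le (sub_nonneg.2 hf)]
      linarith
    have hlxw : ⟪lam • x, w⟫ = lam * ⟪x, w⟫ := real_inner_smul_left _ _ _
    have hdist1 : dist x (lam • x) = (lam - 1) * ‖x‖ := by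
      rw [dist_eq_norm]
      have h : x - lam • x = (1 - lam) • x := by
        rw [sub_smul, one_smul]
      rw [h, norm_smul, Real.norm_eq_abs, abs_of_nonpos (by linarith)]
      ring
    by_cases hcase : lam * ⟪x, w⟫ ≤ t
    · refine ⟨lam • x, hlx, hlxu, by rw [hlxw]; exact hcase, ?_⟩
      rw [hdist1, hrdef, le_div_iff₀ (by positivity : (0:ℝ) < m * c)]
      nlinarith [mul_le_mul hlam1' hxct (by positivity) (by linarith : (0:ℝ) ≤ 3 * η),
        mul_nonneg (mul_nonneg hηpos.le htpos.le) (by linarith : (0:ℝ) ≤ lam - 1),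
        norm_nonneg x]
    · push_neg at hcase
      set a : ℝ := lam * ⟪x, w⟫ with hadef
      have hat : a ≤ lam * t := mul_le_mul_of_nonneg_left hxt (by linarith)
      have hden : t / 2 ≤ a - ⟪z, w⟫ := by linarith
      have hdenpos : 0 < a - ⟪z, w⟫ := by linarith
      set s : ℝ := (a - t) / (a - ⟪z, w⟫) with hsdef
      have hs0 : 0 ≤ s := div_nonneg (by linarith) hdenpos.le
      have hs1 : s ≤ 1 := by
        rw [hsdef, div_le_one hdenpos]; linarith
      have hseq : s * (a - ⟪z, w⟫) = a - t := by
        rw [hsdef]; exact div_mul_cancel₀ _ hdenpos.ne'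
      refine ⟨(1 - s) • (lam • x) + s • z, ?_, ?_, ?_, ?_⟩
      · exact hC_conv hlx hzC (by linarith) hs0 (by ring)
      · intro u hu
        have h1 := hlxu u hu
        have h2 : ⟪z, u⟫ ≤ -(f₀ u + η) := by
          have := hzu u hu
          have hfu : f₀ u ≤ M := hM hu
          linarith
        have e1 : ⟪(1 - s) • (lam • x), u⟫ = (1 - s) * ⟪lam • x, u⟫ :=
          real_inner_smul_left _ _ _
        have e2 : ⟪s • z, u⟫ = s * ⟪z, u⟫ := real_inner_smul_left _ _ _
        rw [inner_add_left, e1, e2]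
        nlinarith [mul_le_mul_of_nonneg_left h1 (by linarith : (0:ℝ) ≤ 1 - s),
          mul_le_mul_of_nonneg_left h2 hs0]
      · have e1 : ⟪(1 - s) • (lam • x), w⟫ = (1 - s) * ⟪lam • x, w⟫ :=
          real_inner_smul_left _ _ _
        have e2 : ⟪s • z, w⟫ = s * ⟪z, w⟫ := real_inner_smul_left _ _ _
        rw [inner_add_left, e1, e2, hlxw]
        linarith [hseq]
      · have hdist2 : dist (lam • x) ((1 - s) • (lam • x) + s • z) = s * ‖lam • x - z‖ := by
          rw [dist_eq_norm]
          have h : lam • x - ((1 - s) • (lam • x) + s • z) = s • (lam • x - z) := by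
            rw [sub_smul, one_smul, smul_sub]
            abel
          rw [h, norm_smul, Real.norm_eq_abs, abs_of_nonneg hs0]
        have hnz : ‖lam • x - z‖ ≤ lam * ‖x‖ + ‖z‖ := by
          calc ‖lam • x - z‖ ≤ ‖lam • x‖ + ‖z‖ := norm_sub_le _ _
            _ = lam * ‖x‖ + ‖z‖ := by
                rw [norm_smul, Real.norm_eq_abs, abs_of_nonneg (by linarith)]
        have hzct : c * ‖z‖ ≤ t / 2 := le_trans (hc z hzC) htz2
        have hst : s * (t / 2) ≤ (lam - 1) * t := by
          calc s * (t / 2) ≤ s * (a - ⟪z, w⟫) :=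
                mul_le_mul_of_nonneg_left hden hs0
            _ = a - t := hseq
            _ ≤ (lam - 1) * t := by nlinarith
        have htri : dist x ((1 - s) • (lam • x) + s • z)
            ≤ (lam - 1) * ‖x‖ + s * (lam * ‖x‖ + ‖z‖) := by
          calc dist x ((1 - s) • (lam • x) + s • z)
              ≤ dist x (lam • x) + dist (lam • x) ((1 - s) • (lam • x) + s • z) :=
                dist_triangle _ _ _
            _ = (lam - 1) * ‖x‖ + s * ‖lam • x - z‖ := by rw [hdist1, hdist2]
            _ ≤ (lam - 1) * ‖x‖ + s * (lam * ‖x‖ + ‖z‖) := by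
                have := mul_le_mul_of_nonneg_left hnz hs0
                linarith
        refine le_trans htri ?_
        rw [hrdef, le_div_iff₀ (by positivity : (0:ℝ) < m * c)]
        -- multiply out: need ((lam-1)‖x‖ + s(lam‖x‖+‖z‖)) * (m*c) ≤ 21 η t
        have hb1 : (lam - 1) * ‖x‖ * (m * c) ≤ 3 * η * t := by
          nlinarith [mul_le_mul hlam1' hxct (by positivity) (by linarith : (0:ℝ) ≤ 3 * η)]
        have hstm : m * (s * t) ≤ 6 * η * t := by
          linarith only [mul_le_mul_of_nonneg_left hst hmpos.le,
            mul_le_mul_of_nonneg_right hlam1' htpos.le]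
        have hb2 : s * (lam * ‖x‖) * (m * c) ≤ 12 * η * t := by
          have h1 : s * (lam * (c * ‖x‖)) ≤ s * (2 * t) := by
            refine mul_le_mul_of_nonneg_left ?_ hs0
            calc lam * (c * ‖x‖) ≤ lam * t := mul_le_mul_of_nonneg_left hxct (by linarith)
              _ ≤ 2 * t := mul_le_mul_of_nonneg_right hlam2 htpos.le
          linarith only [mul_le_mul_of_nonneg_left h1 hmpos.le, hstm]
        have hb3 : s * ‖z‖ * (m * c) ≤ 3 * η * t := by
          have h1 : s * (c * ‖z‖) ≤ s * (t / 2) := mul_le_mul_of_nonneg_left hzct hs0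
          linarith only [mul_le_mul_of_nonneg_left h1 hmpos.le, hstm]
        linarith only [hb1, hb2, hb3, mul_nonneg hηpos.le htpos.le]
  -- uniform closeness of f j to f₀
  obtain ⟨N, hN⟩ := eventually_atTop.1 ((Metric.tendstoUniformlyOn_iff.1 hconv) η hηpos)
  refine ⟨N, ?_⟩
  intro j hj
  have hclose : ∀ u ∈ ω, |f₀ u - f j u| < η := by
    intro u hu
    have := hN j hj u hu
    rwa [Real.dist_eq] at this
  -- the Hausdorff distance bound
  have hHle : Metric.hausdorffDist
      ((C ∩ ⋂ u ∈ ω, {x : EuclideanSpace ℝ (Fin n) | ⟪x, u⟫ ≤ -f j u}) ∩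
        (C ∩ {x : EuclideanSpace ℝ (Fin n) | ⟪x, w⟫ ≤ t}))
      ((C ∩ ⋂ u ∈ ω, {x : EuclideanSpace ℝ (Fin n) | ⟪x, u⟫ ≤ -f₀ u}) ∩
        (C ∩ {x : EuclideanSpace ℝ (Fin n) | ⟪x, w⟫ ≤ t})) ≤ r := by
    apply Metric.hausdorffDist_le_of_mem_dist hrpos.le
    · intro x hx
      simp only [Set.mem_inter_iff, Set.mem_iInter, Set.mem_setOf_eq] at hx
      obtain ⟨⟨hxC, hxu⟩, _, hxt⟩ := hx
      have hxu' : ∀ u ∈ ω, ⟪x, u⟫ ≤ -(f₀ u - η) := by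
        intro u hu
        have h1 := hxu u hu
        have h2 := hclose u hu
        have := abs_lt.1 h2
        linarith [this.2]
      obtain ⟨y, hyC, hyu, hyw, hyd⟩ := key x hxC hxu' hxt
      refine ⟨y, ?_, hyd⟩
      simp only [Set.mem_inter_iff, Set.mem_iInter, Set.mem_setOf_eq]
      exact ⟨⟨hyC, fun u hu => by linarith [hyu u hu, hηpos]⟩, hyC, hyw⟩
    · intro x hx
      simp only [Set.mem_inter_iff, Set.mem_iInter, Set.mem_setOf_eq] at hx
      obtain ⟨⟨hxC, hxu⟩, _, hxt⟩ := hx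
      have hxu' : ∀ u ∈ ω, ⟪x, u⟫ ≤ -(f₀ u - η) := by
        intro u hu
        have h1 := hxu u hu
        linarith [hηpos]
      obtain ⟨y, hyC, hyu, hyw, hyd⟩ := key x hxC hxu' hxt
      refine ⟨y, ?_, hyd⟩
      simp only [Set.mem_inter_iff, Set.mem_iInter, Set.mem_setOf_eq]
      refine ⟨⟨hyC, fun u hu => ?_⟩, hyC, hyw⟩
      have h1 := hyu u hu
      have h2 := abs_lt.1 (hclose u hu)
      linarith [h2.1]
  have hrε : r < ε := by
    rw [hrdef, div_lt_iff₀ (by positivity : (0:ℝ) < m * c)]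
    have : η * (42 * t) ≤ ε * m * c := by
      rw [← le_div_iff₀ (by positivity : (0:ℝ) < 42 * t)]
      exact hηε
    linarith only [this, mul_pos hηpos htpos,
      mul_pos (mul_pos hε hmpos) hcpos]
  rw [Real.dist_eq, sub_zero, abs_of_nonneg Metric.hausdorffDist_nonneg]
  exact lt_of_le_of_lt hHle hrε
end
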